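/- arXiv:1701.02299 — 7 statements merged into one kernel-verified Lean document; each statement's English description precedes it below -/
import Mathlib

section
/- Let 1 ≤ k < n be integers. For any nonempty set of codes E ⊆ ℝ^{(k+1)(n−k)}, the union of the corresponding k-dimensional affine subspaces satisfies dim(⋃_{x∈E} P(x)) ≤ k + dim E. -/
open scoped ENNReal

/-- For a code `x = (a, b¹, …, bᵏ)`, the `k`-dimensional affine subspace
`P(x) = {(t, a + t₁b¹ + ⋯ + t_k bᵏ) : t ∈ ℝᵏ}` of `ℝⁿ ≅ ℝᵏ × ℝ^{n-k}` in graph form. -/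
def affGraph (n k : ℕ) (x : (Fin (n - k) → ℝ) × (Fin k → Fin (n - k) → ℝ)) :
    Set ((Fin k → ℝ) × (Fin (n - k) → ℝ)) :=
  {p | ∃ t : Fin k → ℝ, p = (t, x.1 + ∑ i, t i • x.2 i)}

section AffProofSection
open Set Metric MeasureTheory Filter
open scoped NNReal Topology

noncomputable section
namespace AffProof


abbrev Cd (n k : ℕ) := (Fin (n - k) → ℝ) × (Fin k → Fin (n - k) → ℝ)
abbrev Tp (k : ℕ) := Fin k → ℝ

def F (n k : ℕ) (p : Tp k × Cd n k) : (Fin k → ℝ) × (Fin (n - k) → ℝ) :=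
  (p.1, p.2.1 + ∑ i, p.1 i • p.2.2 i)

def cube (k : ℕ) (R s : ℝ) {N : ℕ} (γ : Fin k → Fin N) : Set (Fin k → ℝ) :=
  Set.univ.pi fun i => Icc (-R + γ i * s) (-R + γ i * s + s)

variable (n k : ℕ)

lemma lip (R : ℝ) (hR : 0 ≤ R) :
    LipschitzOnWith ((1 + 2*k*R).toNNReal) (F n k)
      (closedBall (0 : Tp k) R ×ˢ closedBall (0 : Cd n k) R) := by
  rw [lipschitzOnWith_iff_dist_le_mul]
  rintro ⟨t, x⟩ ⟨ht, hx⟩ ⟨u, y⟩ ⟨hu, hy⟩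
  simp only [mem_closedBall, dist_zero_right] at ht hx hu hy
  have hpq : dist t u ≤ dist ((t,x) : Tp k × Cd n k) (u,y) := le_max_left _ _
  have hpq2 : dist x y ≤ dist ((t,x) : Tp k × Cd n k) (u,y) := le_max_right _ _
  have hd0 : (0:ℝ) ≤ dist ((t,x) : Tp k × Cd n k) (u,y) := dist_nonneg
  have htu0 : (0:ℝ) ≤ dist t u := dist_nonneg
  have hxy0 : (0:ℝ) ≤ dist x y := dist_nonneg
  have hk0 : (0:ℝ) ≤ (k:ℝ) := Nat.cast_nonneg k
  rw [F, F, Prod.dist_eq, Real.coe_toNNReal _ (by positivity)]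
  dsimp only
  apply max_le
  · nlinarith [mul_nonneg (mul_nonneg (by linarith : (0:ℝ) ≤ 2*(k:ℝ)) hR) hd0]
  · rw [dist_eq_norm]
    have key : x.1 + ∑ i, t i • x.2 i - (y.1 + ∑ i, u i • y.2 i)
        = (x.1 - y.1) + ∑ i, ((t i - u i) • x.2 i + u i • (x.2 i - y.2 i)) := by
      simp only [sub_smul, smul_sub, Finset.sum_add_distrib, Finset.sum_sub_distrib]
      abel
    rw [key]
    have hterm : ∀ i : Fin k, ‖(t i - u i) • x.2 i + u i • (x.2 i - y.2 i)‖
        ≤ 2 * R * dist ((t,x) : Tp k × Cd n k) (u,y) := by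
      intro i
      have h1 : ‖(t i - u i) • x.2 i‖ ≤ dist t u * R := by
        rw [norm_smul]
        have heq : ‖t i - u i‖ = dist (t i) (u i) := (dist_eq_norm _ _).symm
        have h2 : dist (t i) (u i) ≤ dist t u := dist_le_pi_dist t u i
        have h3 : ‖x.2 i‖ ≤ R := le_trans (norm_le_pi_norm _ i) (le_trans (norm_snd_le x) hx)
        have h4 : (0:ℝ) ≤ ‖t i - u i‖ := norm_nonneg _
        have h4' : (0:ℝ) ≤ ‖x.2 i‖ := norm_nonneg _
        rw [heq]
        nlinarith
      have h5 : ‖u i • (x.2 i - y.2 i)‖ ≤ R * dist x y := by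
        rw [norm_smul]
        have h6 : ‖u i‖ ≤ R := le_trans (norm_le_pi_norm _ i) hu
        have h7 : ‖x.2 i - y.2 i‖ ≤ dist x y := by
          rw [← dist_eq_norm]
          refine le_trans (dist_le_pi_dist _ _ i) ?_
          rw [Prod.dist_eq]; exact le_max_right _ _
        nlinarith [norm_nonneg (u i), norm_nonneg (x.2 i - y.2 i)]
      calc ‖(t i - u i) • x.2 i + u i • (x.2 i - y.2 i)‖
          ≤ ‖(t i - u i) • x.2 i‖ + ‖u i • (x.2 i - y.2 i)‖ := norm_add_le _ _
        _ ≤ dist t u * R + R * dist x y := add_le_add h1 h5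
        _ ≤ 2 * R * dist ((t,x) : Tp k × Cd n k) (u,y) := by nlinarith
    have hfst : ‖x.1 - y.1‖ ≤ dist x y := by
      rw [← dist_eq_norm, Prod.dist_eq]; exact le_max_left _ _
    calc ‖(x.1 - y.1) + ∑ i, ((t i - u i) • x.2 i + u i • (x.2 i - y.2 i))‖
        ≤ ‖x.1 - y.1‖ + ‖∑ i, ((t i - u i) • x.2 i + u i • (x.2 i - y.2 i))‖ := norm_add_le _ _
      _ ≤ ‖x.1 - y.1‖ + ∑ i, ‖(t i - u i) • x.2 i + u i • (x.2 i - y.2 i)‖ :=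
          add_le_add le_rfl (norm_sum_le _ _)
      _ ≤ dist ((t,x) : Tp k × Cd n k) (u,y) + ∑ _i : Fin k, 2 * R * dist ((t,x) : Tp k × Cd n k) (u,y) := by
          apply add_le_add (le_trans hfst hpq2)
          exact Finset.sum_le_sum fun i _ => hterm i
      _ = (1 + 2*k*R) * dist ((t,x) : Tp k × Cd n k) (u,y) := by
          rw [Finset.sum_const, Finset.card_univ, Fintype.card_fin]
          push_cast; ring

lemma cube_diam (R s : ℝ) (hs : 0 ≤ s) {N : ℕ} (γ : Fin k → Fin N) :
    EMetric.diam (cube k R s γ) ≤ ENNReal.ofReal s := by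
  refine EMetric.diam_pi_le_of_le fun i => ?_
  rw [Real.ediam_Icc]
  apply ENNReal.ofReal_le_ofReal
  ring_nf
  simp

lemma grid_cover (R s : ℝ) (hR : 0 < R) (hs : 0 < s) (hsR : s ≤ 2*R) :
    closedBall (0 : Fin k → ℝ) R ⊆ ⋃ γ : Fin k → Fin ⌈2*R/s⌉₊, cube k R s γ := by
  intro t ht
  rw [mem_closedBall, dist_zero_right] at ht
  set N := ⌈2*R/s⌉₊ with hN
  have hN1 : 1 ≤ N := by
    rw [hN, Nat.one_le_ceil_iff]
    positivity
  have hNs : 2*R ≤ N * s := by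
    rw [← div_le_iff₀ hs]
    exact Nat.le_ceil _
  have hmem : ∀ i, t i ∈ Icc (-R) R := fun i => by
    constructor
    · have := neg_abs_le (t i)
      have h := le_trans (norm_le_pi_norm t i) ht
      rw [Real.norm_eq_abs] at h
      linarith
    · have := le_abs_self (t i)
      have h := le_trans (norm_le_pi_norm t i) ht
      rw [Real.norm_eq_abs] at h
      linarith
  refine mem_iUnion.2 ?_
  have hchoice : ∀ i : Fin k, ∃ j : Fin N, t i ∈ Icc (-R + j*s) (-R + j*s + s) := by
    intro i
    obtain ⟨h1, h2⟩ := hmem i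
    set a : ℝ := (t i + R)/s with ha
    have ha0 : 0 ≤ a := div_nonneg (by linarith) hs.le
    set j0 := ⌊a⌋₊ with hj0
    by_cases hcase : j0 ≤ N - 1
    · refine ⟨⟨j0, by omega⟩, ?_, ?_⟩
      · have : (j0:ℝ) ≤ a := Nat.floor_le ha0
        rw [ha, le_div_iff₀ hs] at this
        simp only
        linarith
      · have : a < j0 + 1 := Nat.lt_floor_add_one a
        rw [ha, div_lt_iff₀ hs] at this
        simp only
        nlinarith
    · push_neg at hcase
      have hjN : (N:ℝ) ≤ j0 := by exact_mod_cast by omega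
      refine ⟨⟨N-1, by omega⟩, ?_, ?_⟩
      · have hfl : (j0:ℝ) ≤ a := Nat.floor_le ha0
        have : (N:ℝ) * s ≤ t i + R := by
          rw [ha] at hfl
          exact (le_div_iff₀ hs).mp (le_trans hjN hfl)
        have hN1' : ((N-1 : ℕ):ℝ) = (N:ℝ) - 1 := by
          push_cast [hN1]; ring
        simp only [hN1']
        nlinarith
      · have hN1' : ((N-1 : ℕ):ℝ) = (N:ℝ) - 1 := by
          push_cast [hN1]; ring
        simp only [hN1']
        nlinarith
  choose γ hγ using hchoice
  exact ⟨γ, fun i _ => hγ i⟩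

lemma diam_prod_le {α β : Type*} [PseudoEMetricSpace α] [PseudoEMetricSpace β]
    (A : Set α) (B : Set β) :
    EMetric.diam (A ×ˢ B) ≤ max (EMetric.diam A) (EMetric.diam B) := by
  refine EMetric.diam_le ?_
  rintro ⟨a, b⟩ ⟨ha, hb⟩ ⟨a', b'⟩ ⟨ha', hb'⟩
  rw [Prod.edist_eq]
  exact max_le_max (EMetric.edist_le_diam_of_mem ha ha') (EMetric.edist_le_diam_of_mem hb hb')



lemma exists_cover {X : Type*} [EMetricSpace X] [MeasurableSpace X] [BorelSpace X]
    (s : Set X) (d : ℝ) (hd : 0 < d) (hμ : μH[d] s = 0) (ρ δ : ℝ≥0∞) (hρ : 0 < ρ) (hδ : 0 < δ) :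
    ∃ U : ℕ → Set X, s ⊆ ⋃ j, U j ∧ (∀ j, EMetric.diam (U j) ≤ ρ) ∧
      ∑' j, EMetric.diam (U j) ^ d < δ := by
  have h1 : (⨅ (t : ℕ → Set X) (_ : s ⊆ ⋃ m, t m) (_ : ∀ m, EMetric.diam (t m) ≤ ρ),
      ∑' m, ⨆ _ : (t m).Nonempty, EMetric.diam (t m) ^ d) ≤ 0 := by
    rw [← hμ, MeasureTheory.Measure.hausdorffMeasure_apply]
    exact le_iSup₂ (f := fun (r : ℝ≥0∞) (_ : 0 < r) =>
      ⨅ (t : ℕ → Set X) (_ : s ⊆ ⋃ m, t m) (_ : ∀ m, EMetric.diam (t m) ≤ r),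
        ∑' m, ⨆ _ : (t m).Nonempty, EMetric.diam (t m) ^ d) ρ hρ
  have h2 := lt_of_le_of_lt h1 hδ
  rw [iInf_lt_iff] at h2
  obtain ⟨U, h2⟩ := h2
  rw [iInf_lt_iff] at h2
  obtain ⟨hcov, h2⟩ := h2
  rw [iInf_lt_iff] at h2
  obtain ⟨hdiam, hsum⟩ := h2
  refine ⟨U, hcov, hdiam, ?_⟩
  refine lt_of_le_of_lt (le_of_eq (tsum_congr fun j => ?_)) hsum
  rcases (U j).eq_empty_or_nonempty with h | h
  · simp [h, EMetric.diam_empty, ENNReal.zero_rpow_of_pos hd]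
    exact Or.inl ⟨EMetric.diam_empty, hd⟩
  · simp [h]


lemma key (n k : ℕ) (R : ℝ) (hR : 1 ≤ R) (E' : Set (Cd n k)) (hE' : E' ⊆ closedBall 0 R)
    (d : ℝ≥0) (hd : dimH E' < d) :
    dimH (F n k '' (closedBall (0 : Tp k) R ×ˢ E')) ≤ k + d := by
  have hR0 : (0:ℝ) < R := by linarith
  have hd0 : 0 < d := by
    have : (0:ℝ≥0∞) < (d:ℝ≥0∞) := lt_of_le_of_lt zero_le hd
    exact_mod_cast this
  have hd0' : (0:ℝ) < (d:ℝ) := hd0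
  have hμ : μH[(d:ℝ)] E' = 0 := hausdorffMeasure_of_dimH_lt hd
  set C : ℝ≥0 := (1 + 2*k*R).toNNReal with hC
  set e : ℝ := (k:ℝ) + (d:ℝ) with he
  have he0 : 0 ≤ e := by positivity
  -- main claim
  have main : μH[e] (F n k '' (closedBall (0 : Tp k) R ×ˢ E')) = 0 := by
    -- half powers
    have hhalf : ∀ m : ℕ, ENNReal.ofReal ((2⁻¹:ℝ)^m) = (2⁻¹:ℝ≥0∞)^m := by
      intro m
      rw [ENNReal.ofReal_pow (by norm_num)]
      congr 1
      rw [ENNReal.ofReal_inv_of_pos (by norm_num : (0:ℝ) < 2)]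
      norm_num
    have hhalfpos : ∀ m : ℕ, (0:ℝ) < (2⁻¹:ℝ)^m := fun m => by positivity
    have hhalfle1 : ∀ m : ℕ, ((2⁻¹:ℝ))^m ≤ 1 := fun m =>
      pow_le_one₀ (by norm_num) (by norm_num)
    -- choose covers
    have hcovers : ∀ m : ℕ, ∃ U : ℕ → Set (Cd n k), E' ⊆ ⋃ j, U j ∧
        (∀ j, EMetric.diam (U j) ≤ ENNReal.ofReal ((2⁻¹:ℝ)^m)) ∧
        ∑' j, EMetric.diam (U j) ^ (d:ℝ) < (ENNReal.ofReal ((2⁻¹:ℝ)^m)) ^ (d:ℝ) := by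
      intro m
      refine exists_cover E' d hd0' hμ _ _ (by simp [ENNReal.ofReal_pos, hhalfpos m]) ?_
      exact ENNReal.rpow_pos (by simp [ENNReal.ofReal_pos, hhalfpos m]) (by simp)
    choose U hUcov hUdiam hUsum using hcovers
    -- sizes
    set σ : ℕ → ℕ → ℝ := fun m j =>
      max ((EMetric.diam (U m j)).toReal) ((2⁻¹:ℝ)^m * (2⁻¹:ℝ)^j) with hσ
    have hσpos : ∀ m j, 0 < σ m j := fun m j =>
      lt_max_of_lt_right (by positivity)
    have hσlem : ∀ m j, σ m j ≤ (2⁻¹:ℝ)^m := by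
      intro m j
      apply max_le
      · exact ENNReal.toReal_le_of_le_ofReal (hhalfpos m).le (hUdiam m j)
      · nlinarith [hhalfpos m, hhalfle1 j, hhalfpos j]
    have hσle2R : ∀ m j, σ m j ≤ 2*R := fun m j =>
      le_trans (hσlem m j) (by nlinarith [hhalfle1 m])
    have hUdiam' : ∀ m j, EMetric.diam (U m j) ≤ ENNReal.ofReal (σ m j) := by
      intro m j
      have hfin : EMetric.diam (U m j) ≠ ⊤ :=
        ne_top_of_le_ne_top ENNReal.ofReal_ne_top (hUdiam m j)
      calc EMetric.diam (U m j) = ENNReal.ofReal ((EMetric.diam (U m j)).toReal) :=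
            (ENNReal.ofReal_toReal hfin).symm
        _ ≤ ENNReal.ofReal (σ m j) := ENNReal.ofReal_le_ofReal (le_max_left _ _)
    -- index types and covers
    set N : ℕ → ℕ → ℕ := fun m j => ⌈2*R/(σ m j)⌉₊ with hNdef
    -- geometric ratio
    set q : ℝ≥0∞ := (2⁻¹ : ℝ≥0∞) ^ (d:ℝ) with hqdef
    have hq1 : q < 1 := ENNReal.rpow_lt_one (by norm_num) hd0'
    have hqm : ∀ m : ℕ, ((2⁻¹:ℝ≥0∞)^m)^(d:ℝ) = q^m := by
      intro m
      rw [← ENNReal.rpow_natCast (2⁻¹:ℝ≥0∞) m, ← ENNReal.rpow_mul, hqdef,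
        ← ENNReal.rpow_natCast ((2⁻¹:ℝ≥0∞) ^ (d:ℝ)) m, ← ENNReal.rpow_mul, mul_comm]
    set G : ℝ≥0∞ := (1 - q)⁻¹ with hGdef
    have hGne : G ≠ ⊤ := by
      rw [hGdef, Ne, ENNReal.inv_eq_top, tsub_eq_zero_iff_le]
      exact not_le.2 hq1
    set K0 : ℝ≥0∞ := (C:ℝ≥0∞)^e * (ENNReal.ofReal (4*R))^k with hK0
    have hK0ne : K0 ≠ ⊤ := by
      apply ENNReal.mul_ne_top
      · exact ENNReal.rpow_ne_top_of_nonneg he0 ENNReal.coe_ne_top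
      · exact ENNReal.pow_ne_top ENNReal.ofReal_ne_top
    -- diameter bound for the pieces
    have hdiam_t : ∀ (m j : ℕ) (γ : Fin k → Fin (N m j)),
        EMetric.diam (F n k '' ((cube k R (σ m j) γ ∩ closedBall 0 R) ×ˢ (U m j ∩ E')))
          ≤ (C:ℝ≥0∞) * ENNReal.ofReal (σ m j) := by
      intro m j γ
      have hsub : (cube k R (σ m j) γ ∩ closedBall 0 R) ×ˢ (U m j ∩ E')
          ⊆ closedBall (0 : Tp k) R ×ˢ closedBall (0 : Cd n k) R :=
        Set.prod_mono inter_subset_right (fun x hx => hE' hx.2)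
      have hdW : EMetric.diam ((cube k R (σ m j) γ ∩ closedBall 0 R) ×ˢ (U m j ∩ E'))
          ≤ ENNReal.ofReal (σ m j) := by
        refine le_trans (diam_prod_le _ _) (max_le ?_ ?_)
        · exact le_trans (EMetric.diam_mono inter_subset_left)
            (cube_diam k R (σ m j) (hσpos m j).le γ)
        · exact le_trans (EMetric.diam_mono inter_subset_left) (hUdiam' m j)
      have := ((lip n k R (by linarith)).holderOnWith).ediam_image_le_of_subset_of_le hsub hdW
      rwa [NNReal.coe_one, ENNReal.rpow_one] at this
    -- apply the liminf bound
    have hbound := MeasureTheory.Measure.hausdorffMeasure_le_liminf_tsum (X := (Fin k → ℝ) × (Fin (n - k) → ℝ))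
      (ι := fun m : ℕ => Σ j : ℕ, (Fin k → Fin (N m j)))
      e (F n k '' (closedBall (0 : Tp k) R ×ˢ E'))
      (l := atTop) (fun m => (C:ℝ≥0∞) * (2⁻¹:ℝ≥0∞)^m)
      (by
        have h0 : Tendsto (fun m : ℕ => (2⁻¹:ℝ≥0∞)^m) atTop (𝓝 0) :=
          ENNReal.tendsto_pow_atTop_nhds_zero_of_lt_one (by norm_num)
        have := ENNReal.Tendsto.const_mul h0 (Or.inr (ENNReal.coe_ne_top (r := C)))
        simpa using this)
      (fun m i => F n k '' ((cube k R (σ m i.1) i.2 ∩ closedBall 0 R) ×ˢ (U m i.1 ∩ E')))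
      (by
        refine Eventually.of_forall fun m => ?_
        rintro ⟨j, γ⟩
        refine le_trans (hdiam_t m j γ) (mul_le_mul_right ?_ _)
        rw [← hhalf m]
        exact ENNReal.ofReal_le_ofReal (hσlem m j))
      (by
        refine Eventually.of_forall fun m => ?_
        rintro y ⟨⟨tt, x⟩, ⟨htB, hxE⟩, rfl⟩
        obtain ⟨j, hj⟩ := mem_iUnion.1 (hUcov m hxE)
        obtain ⟨γ, hγ⟩ := mem_iUnion.1
          (grid_cover k R (σ m j) hR0 (hσpos m j) (hσle2R m j) htB)
        exact mem_iUnion.2 ⟨⟨j, γ⟩, mem_image_of_mem _ ⟨⟨hγ, htB⟩, ⟨hj, hxE⟩⟩⟩)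
    -- bound the sums
    have hSb : ∀ m : ℕ, (∑' i : Σ j : ℕ, (Fin k → Fin (N m j)),
        EMetric.diam (F n k '' ((cube k R (σ m i.1) i.2 ∩ closedBall 0 R) ×ˢ (U m i.1 ∩ E'))) ^ e)
        ≤ (K0 * (1 + G)) * q ^ m := by
      intro m
      have step1 : ∀ (j : ℕ) (γ : Fin k → Fin (N m j)),
          EMetric.diam (F n k '' ((cube k R (σ m j) γ ∩ closedBall 0 R) ×ˢ (U m j ∩ E'))) ^ e
            ≤ ((C:ℝ≥0∞) * ENNReal.ofReal (σ m j)) ^ e :=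
        fun j γ => ENNReal.rpow_le_rpow (hdiam_t m j γ) he0
      have hNσ : ∀ j : ℕ, (N m j : ℝ) * σ m j ≤ 4*R := by
        intro j
        have h1 : (N m j : ℝ) < 2*R/(σ m j) + 1 :=
          Nat.ceil_lt_add_one (by positivity)
        have h2 : (2*R/(σ m j)) * σ m j = 2*R := div_mul_cancel₀ _ (hσpos m j).ne'
        nlinarith [hσpos m j, hσle2R m j, hσlem m j]
      have perj : ∀ j : ℕ, ((N m j : ℝ≥0∞))^k * ((C:ℝ≥0∞) * ENNReal.ofReal (σ m j)) ^ e
          ≤ K0 * (ENNReal.ofReal (σ m j)) ^ (d:ℝ) := by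
        intro j
        set z : ℝ≥0∞ := ENNReal.ofReal (σ m j) with hz
        have hz0 : z ≠ 0 := by
          rw [hz, Ne, ENNReal.ofReal_eq_zero]
          exact not_le.2 (hσpos m j)
        have hzt : z ≠ ⊤ := ENNReal.ofReal_ne_top
        have he' : ((C:ℝ≥0∞) * z) ^ e = (C:ℝ≥0∞)^e * (z^(k:ℝ) * z^(d:ℝ)) := by
          rw [ENNReal.mul_rpow_of_nonneg _ _ he0, he, ENNReal.rpow_add _ _ hz0 hzt]
        have hNz : ((N m j : ℝ≥0∞)) * z = ENNReal.ofReal ((N m j : ℝ) * σ m j) := by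
          rw [ENNReal.ofReal_mul (by positivity), ENNReal.ofReal_natCast]
        calc ((N m j : ℝ≥0∞))^k * ((C:ℝ≥0∞) * z) ^ e
            = (C:ℝ≥0∞)^e * (((N m j : ℝ≥0∞))^k * z^k) * z^(d:ℝ) := by
              rw [he', ENNReal.rpow_natCast]; ring
          _ = (C:ℝ≥0∞)^e * ((N m j : ℝ≥0∞) * z)^k * z^(d:ℝ) := by rw [mul_pow]
          _ ≤ (C:ℝ≥0∞)^e * (ENNReal.ofReal (4*R))^k * z^(d:ℝ) := by
              refine mul_le_mul_left (mul_le_mul_right ?_ _) _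
              rw [hNz]
              exact pow_le_pow_left' (ENNReal.ofReal_le_ofReal (hNσ j)) k
          _ = K0 * z^(d:ℝ) := by rw [hK0]
      have hzd : ∀ j : ℕ, (ENNReal.ofReal (σ m j)) ^ (d:ℝ)
          ≤ EMetric.diam (U m j) ^ (d:ℝ) + q^m * q^j := by
        intro j
        rcases max_choice ((EMetric.diam (U m j)).toReal) ((2⁻¹:ℝ)^m * (2⁻¹:ℝ)^j) with hcc | hcc
        · have hfin : EMetric.diam (U m j) ≠ ⊤ :=
            ne_top_of_le_ne_top ENNReal.ofReal_ne_top (hUdiam m j)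
          have : ENNReal.ofReal (σ m j) = EMetric.diam (U m j) := by
            rw [hσ]; simp only; rw [hcc, ENNReal.ofReal_toReal hfin]
          rw [this]
          exact le_add_right le_rfl
        · have : ENNReal.ofReal (σ m j) = (2⁻¹:ℝ≥0∞)^(m+j) := by
            rw [hσ]; simp only; rw [hcc, ← pow_add, hhalf (m+j)]
          rw [this, hqm (m+j), pow_add]
          exact le_add_left le_rfl
      calc (∑' i : Σ j : ℕ, (Fin k → Fin (N m j)),
            EMetric.diam (F n k '' ((cube k R (σ m i.1) i.2 ∩ closedBall 0 R) ×ˢ (U m i.1 ∩ E'))) ^ e)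
          = ∑' (j : ℕ), ∑' (γ : Fin k → Fin (N m j)),
            EMetric.diam (F n k '' ((cube k R (σ m j) γ ∩ closedBall 0 R) ×ˢ (U m j ∩ E'))) ^ e :=
            ENNReal.tsum_sigma (fun j γ =>
              EMetric.diam (F n k '' ((cube k R (σ m j) γ ∩ closedBall 0 R) ×ˢ (U m j ∩ E'))) ^ e)
        _ ≤ ∑' (j : ℕ), ∑' (_γ : Fin k → Fin (N m j)), ((C:ℝ≥0∞) * ENNReal.ofReal (σ m j)) ^ e :=
            ENNReal.tsum_le_tsum fun j => ENNReal.tsum_le_tsum fun γ => step1 j γ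
        _ = ∑' (j : ℕ), ((N m j : ℝ≥0∞))^k * ((C:ℝ≥0∞) * ENNReal.ofReal (σ m j)) ^ e := by
            refine tsum_congr fun j => ?_
            rw [tsum_fintype, Finset.sum_const, Finset.card_univ, Fintype.card_fun,
              Fintype.card_fin, Fintype.card_fin, nsmul_eq_mul]
            push_cast
            ring
        _ ≤ ∑' (j : ℕ), K0 * (ENNReal.ofReal (σ m j)) ^ (d:ℝ) := ENNReal.tsum_le_tsum perj
        _ = K0 * ∑' (j : ℕ), (ENNReal.ofReal (σ m j)) ^ (d:ℝ) := ENNReal.tsum_mul_left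
        _ ≤ K0 * ∑' (j : ℕ), (EMetric.diam (U m j) ^ (d:ℝ) + q^m * q^j) :=
            mul_le_mul_right (ENNReal.tsum_le_tsum hzd) _
        _ = K0 * ((∑' j, EMetric.diam (U m j) ^ (d:ℝ)) + q^m * ∑' j : ℕ, q^j) := by
            rw [ENNReal.tsum_add, ENNReal.tsum_mul_left]
        _ ≤ K0 * (q^m + q^m * G) := by
            refine mul_le_mul_right (add_le_add ?_ ?_) _
            · refine le_trans (hUsum m).le (le_of_eq ?_)
              rw [hhalf m, hqm m]
            · rw [ENNReal.tsum_geometric, ← hGdef]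
        _ = (K0 * (1 + G)) * q ^ m := by ring
    have hlim : Tendsto (fun m : ℕ => (K0 * (1 + G)) * q ^ m) atTop (𝓝 0) := by
      have h0 : Tendsto (fun m : ℕ => q^m) atTop (𝓝 0) :=
        ENNReal.tendsto_pow_atTop_nhds_zero_of_lt_one hq1
      have hne : K0 * (1 + G) ≠ ⊤ :=
        ENNReal.mul_ne_top hK0ne (ENNReal.add_ne_top.2 ⟨ENNReal.one_ne_top, hGne⟩)
      have := ENNReal.Tendsto.const_mul h0 (Or.inr hne)
      simpa using this
    refine le_antisymm ?_ zero_le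
    exact le_trans hbound (le_trans (liminf_le_liminf (Eventually.of_forall hSb))
      (le_of_eq hlim.liminf_eq))
  -- conclude
  have : dimH (F n k '' (closedBall (0 : Tp k) R ×ˢ E')) ≤ ((k:ℝ≥0) + d : ℝ≥0) := by
    apply dimH_le_of_hausdorffMeasure_ne_top
    have : (((k:ℝ≥0) + d : ℝ≥0) : ℝ) = e := by push_cast [he]; ring
    rw [this, main]
    exact ENNReal.zero_ne_top
  refine le_trans this ?_
  push_cast
  rfl

end AffProof
end
end AffProofSection

theorem dimH_union_of_affine_subspaces_le
    (n k : ℕ) (hk : 1 ≤ k) (hkn : k < n)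
    (E : Set ((Fin (n - k) → ℝ) × (Fin k → Fin (n - k) → ℝ))) (hE : E.Nonempty) :
    dimH (⋃ x ∈ E, affGraph n k x) ≤ k + dimH E := by
  classical
  open Set Metric MeasureTheory Filter in
  have hunion : (⋃ x ∈ E, affGraph n k x) = AffProof.F n k '' (Set.univ ×ˢ E) := by
    ext p
    simp only [Set.mem_iUnion, affGraph, Set.mem_image, Set.mem_prod, Set.mem_setOf_eq,
      Set.mem_univ, AffProof.F]
    constructor
    · rintro ⟨x, hx, t, rfl⟩
      exact ⟨(t, x), ⟨trivial, hx⟩, rfl⟩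
    · rintro ⟨⟨t, x⟩, ⟨-, hx⟩, rfl⟩
      exact ⟨x, hx, t, rfl⟩
  rw [hunion]
  have hsub : AffProof.F n k '' (Set.univ ×ˢ E) ⊆
      ⋃ m : ℕ, AffProof.F n k ''
        (Metric.closedBall 0 ((m:ℝ)+1) ×ˢ (E ∩ Metric.closedBall 0 ((m:ℝ)+1))) := by
    rintro y ⟨⟨t, x⟩, ⟨-, hx⟩, rfl⟩
    obtain ⟨m, hm⟩ := exists_nat_ge (max ‖t‖ ‖x‖)
    have h1 : ‖t‖ ≤ (m:ℝ) + 1 := by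
      have := le_max_left ‖t‖ ‖x‖; linarith
    have h2 : ‖x‖ ≤ (m:ℝ) + 1 := by
      have := le_max_right ‖t‖ ‖x‖; linarith
    refine Set.mem_iUnion.2 ⟨m, Set.mem_image_of_mem _ ⟨?_, hx, ?_⟩⟩
    · rwa [Metric.mem_closedBall, dist_zero_right]
    · rwa [Metric.mem_closedBall, dist_zero_right]
  refine le_trans (dimH_mono hsub) ?_
  rw [dimH_iUnion]
  refine iSup_le fun m => ?_
  by_cases htop : dimH E = ⊤
  · rw [htop]
    simp
  refine ENNReal.le_of_forall_pos_le_add fun ε hε _h' => ?_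
  have hεne : (ε : ENNReal) ≠ 0 := by exact_mod_cast hε.ne'
  have hdlt : dimH (E ∩ Metric.closedBall 0 ((m:ℝ)+1)) <
      ((((dimH E).toNNReal + ε : NNReal)) : ENNReal) := by
    calc dimH (E ∩ Metric.closedBall 0 ((m:ℝ)+1)) ≤ dimH E :=
          dimH_mono Set.inter_subset_left
      _ < dimH E + ε := ENNReal.lt_add_right htop hεne
      _ = ((((dimH E).toNNReal + ε : NNReal)) : ENNReal) := by
          rw [ENNReal.coe_add, ENNReal.coe_toNNReal htop]
  have hkey := AffProof.key n k ((m:ℝ)+1) (by have := Nat.cast_nonneg (α := ℝ) m; linarith)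
    (E ∩ Metric.closedBall 0 ((m:ℝ)+1)) Set.inter_subset_right
    ((dimH E).toNNReal + ε) hdlt
  refine le_trans hkey (le_of_eq ?_)
  rw [ENNReal.coe_add, ENNReal.coe_toNNReal htop, add_assoc]
end

section
/- Let (Ω, Σ, μ) be a probability measure space, let ε ∈ (0,1], and let M ≥ 1 be an integer with Σ_{l=M}^∞ 1/l² < ε. Suppose that for each integer l ≥ M, f_l : Ω → [0,∞] is a measurable function, and that Σ_{l=M}^∞ f_l(ω) ≥ ε for every ω ∈ Ω. Then there exists an integer l ≥ M such that μ({ω ∈ Ω : f_l(ω) ≥ 1/l²}) ≥ 1/l². -/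
open scoped ENNReal

theorem exists_index_with_large_measure_of_large_sums
    {Ω : Type*} [MeasurableSpace Ω] (μ : MeasureTheory.Measure Ω)
    [MeasureTheory.IsProbabilityMeasure μ]
    (ε : ℝ) (hε0 : 0 < ε) (hε1 : ε ≤ 1) (M : ℕ) (hM : 1 ≤ M)
    (hsum : ∑' l : ℕ, (1 : ℝ) / ((M + l : ℕ) : ℝ) ^ 2 < ε)
    (f : ℕ → Ω → ℝ≥0∞) (hf : ∀ l, M ≤ l → Measurable (f l))
    (hlow : ∀ ω : Ω, ENNReal.ofReal ε ≤ ∑' l : ℕ, f (M + l) ω) :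
    ∃ l : ℕ, M ≤ l ∧ ENNReal.ofReal (1 / (l : ℝ) ^ 2) ≤
      μ {ω | ENNReal.ofReal (1 / (l : ℝ) ^ 2) ≤ f l ω} := by
  by_contra h
  push_neg at h
  set g : ℕ → ℝ := fun l => (1 : ℝ) / ((M + l : ℕ) : ℝ) ^ 2 with hg
  have hgnonneg : ∀ l, 0 ≤ g l := fun l => by positivity
  have hgsum : Summable g := by
    have h2 : Summable (fun n : ℕ => 1 / (n : ℝ) ^ 2) :=
      Real.summable_one_div_nat_pow.mpr one_lt_two
    have := (summable_nat_add_iff M).mpr h2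
    apply this.congr
    intro n
    simp [g, add_comm]
  have hofReal : ENNReal.ofReal (∑' l, g l) = ∑' l, ENNReal.ofReal (g l) :=
    ENNReal.ofReal_tsum_of_nonneg hgnonneg hgsum
  set E : Set Ω := ⋃ l : ℕ, {ω | ENNReal.ofReal (g l) ≤ f (M + l) ω} with hE
  have hle1 : μ E < 1 := by
    calc μ E ≤ ∑' l, μ {ω | ENNReal.ofReal (g l) ≤ f (M + l) ω} :=
          MeasureTheory.measure_iUnion_le _
      _ ≤ ∑' l, ENNReal.ofReal (g l) := by
          apply ENNReal.tsum_le_tsum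
          intro l
          exact (h (M + l) (Nat.le_add_right _ _)).le
      _ = ENNReal.ofReal (∑' l, g l) := hofReal.symm
      _ < ENNReal.ofReal ε := by
          exact ENNReal.ofReal_lt_ofReal_iff hε0 |>.mpr hsum
      _ ≤ 1 := by
          simpa using ENNReal.ofReal_le_ofReal hε1
  have hne : E ≠ Set.univ := by
    intro hEq
    rw [hEq] at hle1
    simp at hle1
  obtain ⟨ω, hω⟩ := Set.ne_univ_iff_exists_notMem E |>.mp hne
  simp only [hE, Set.mem_iUnion, Set.mem_setOf_eq, not_exists, not_le] at hω
  have : ∑' l, f (M + l) ω < ENNReal.ofReal ε := by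
    calc ∑' l, f (M + l) ω ≤ ∑' l, ENNReal.ofReal (g l) :=
          ENNReal.tsum_le_tsum fun l => (hω l).le
      _ = ENNReal.ofReal (∑' l, g l) := hofReal.symm
      _ < ENNReal.ofReal ε := ENNReal.ofReal_lt_ofReal_iff hε0 |>.mpr hsum
  exact absurd (hlow ω) (not_le.mpr this)
end

section
/- Let 1 ≤ k < n be integers. There is a constant C = C(n,k) > 0 such that for all admissible codes x = (a, b¹,…,b^k) and x' = (a', b'¹,…,b'^k) and all 0 < δ ≤ 1, the Lebesgue measure of the intersection of the open δ-neighborhoods of P(x) and P(x') inside S satisfies L^n(P(x)_δ ∩ P(x')_δ ∩ S) ≤ C · δ^{n−k+1} / (d(x,x') + δ), where d(x,x') = max(‖a−a'‖_∞, max_{1≤i≤k} ‖bⁱ−b'ⁱ‖_∞). -/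
open scoped ENNReal
open MeasureTheory

/-- A code `x = (a, b¹, …, bᵏ)` is admissible if `a ∈ [-1/2,1/2]^{n-k}` and
`a + bⁱ ∈ [-1/2,1/2]^{n-k}` for all `i`. -/
def admissibleCode (n k : ℕ) (x : (Fin (n - k) → ℝ) × (Fin k → Fin (n - k) → ℝ)) : Prop :=
  (∀ j, |x.1 j| ≤ 1 / 2) ∧ ∀ i j, |x.1 j + x.2 i j| ≤ 1 / 2

/-- The set `S = C_simplex × [-1/2,1/2]^{n-k} ⊆ ℝᵏ × ℝ^{n-k}`, where `C_simplex` is the convex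
hull of `{0, e₁, …, e_k}` in `ℝᵏ`. -/
def simplexCube (n k : ℕ) : Set ((Fin k → ℝ) × (Fin (n - k) → ℝ)) :=
  {p | p.1 ∈ convexHull ℝ
        (insert 0 (Set.range fun i : Fin k => (Pi.single i 1 : Fin k → ℝ))) ∧
       ∀ j, |p.2 j| ≤ 1 / 2}

/-- Auxiliary: volume of the part of the cube where an affine function with a large
coefficient in some coordinate is small. -/
lemma slab_bound {k : ℕ} (c0 : ℝ) (c : Fin k → ℝ) (i : Fin k) (hci : c i ≠ 0)
    (η : ℝ) (hη : 0 ≤ η) :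
    volume {s : Fin k → ℝ | (∀ m, s m ∈ Set.Icc (0:ℝ) 1) ∧ |c0 + ∑ m, c m * s m| ≤ η} ≤
      ENNReal.ofReal (2 * η / |c i|) := by
  classical
  set M : Matrix (Fin k) (Fin k) ℝ := (1 : Matrix (Fin k) (Fin k) ℝ).updateRow i c with hM
  set L := Matrix.toLin' M with hL
  have hdet : LinearMap.det L = c i := by
    rw [hL, LinearMap.det_toLin', hM, ← Matrix.cramer_transpose_apply, Matrix.transpose_one,
      Matrix.cramer_one]
    rfl
  have hLapp : ∀ s : Fin k → ℝ, ∀ m, L s m = if m = i then ∑ j, c j * s j else s m := by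
    intro s m
    rw [hL, Matrix.toLin'_apply]
    by_cases h : m = i
    · subst h
      simp [Matrix.mulVec, dotProduct, hM, mul_comm]
    · simp [Matrix.mulVec, dotProduct, hM, Matrix.updateRow_apply, h, Matrix.one_apply,
        Finset.sum_ite_eq' Finset.univ m fun j => s j]
  set slab : Set (Fin k → ℝ) :=
    Set.pi Set.univ (fun m => if m = i then Set.Icc (-c0 - η) (-c0 + η) else Set.Icc (0:ℝ) 1)
    with hslab
  have hsub : {s : Fin k → ℝ | (∀ m, s m ∈ Set.Icc (0:ℝ) 1) ∧ |c0 + ∑ m, c m * s m| ≤ η} ⊆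
      L ⁻¹' slab := by
    rintro s ⟨hs1, hs2⟩ m _
    rw [hLapp]
    rcases abs_le.1 hs2 with ⟨h1, h2⟩
    by_cases h : m = i
    · simp only [h, if_pos]
      constructor <;> linarith
    · simp only [h, if_neg, ite_false]
      exact hs1 m
  have hvslab : volume slab = ENNReal.ofReal (2 * η) := by
    rw [hslab, volume_pi_pi]
    rw [show (fun m => volume (if m = i then Set.Icc (-c0 - η) (-c0 + η) else Set.Icc (0:ℝ) 1)) =
      fun m => if m = i then ENNReal.ofReal (2*η) else 1 by
        funext m; by_cases h : m = i <;> simp [h, Real.volume_Icc] <;> ring_nf <;> simp [ENNReal.ofReal_mul hη]]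
    simp [Finset.prod_ite_eq' Finset.univ i fun _ => ENNReal.ofReal (2*η)]
  calc volume {s : Fin k → ℝ | (∀ m, s m ∈ Set.Icc (0:ℝ) 1) ∧ |c0 + ∑ m, c m * s m| ≤ η}
      ≤ volume (L ⁻¹' slab) := measure_mono hsub
    _ = ENNReal.ofReal |(LinearMap.det L)⁻¹| * volume slab :=
        Measure.addHaar_preimage_linearMap volume (by rw [hdet]; exact hci) slab
    _ ≤ ENNReal.ofReal (2 * η / |c i|) := by
        rw [hvslab, hdet, ← ENNReal.ofReal_mul (abs_nonneg _)]
        apply ENNReal.ofReal_le_ofReal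
        rw [abs_inv, div_eq_inv_mul]

/-- Auxiliary: volume of the part of the cube where an affine function whose largest
coefficient is at least `m` is at most `η` in absolute value. -/
lemma measure_B_le {k : ℕ} (hk : 1 ≤ k) (c0 : ℝ) (c : Fin k → ℝ) (m η : ℝ)
    (hm : 0 < m) (hη : 0 ≤ η) (hc : m ≤ |c0| ∨ ∃ i, m ≤ |c i|) :
    volume {s : Fin k → ℝ | (∀ i, s i ∈ Set.Icc (0:ℝ) 1) ∧ |c0 + ∑ i, c i * s i| ≤ η} ≤
      ENNReal.ofReal (8 * k * η / m) := by
  have hk1 : (1:ℝ) ≤ k := by exact_mod_cast hk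
  have hk0 : (0:ℝ) < k := by linarith
  by_cases hbig : ∃ i, m / (2 * k) ≤ |c i|
  · obtain ⟨i, hi⟩ := hbig
    have hipos : (0:ℝ) < |c i| := lt_of_lt_of_le (by positivity) hi
    refine le_trans (slab_bound c0 c i (by simpa [abs_pos] using hipos) η hη) ?_
    apply ENNReal.ofReal_le_ofReal
    calc 2 * η / |c i| ≤ 2 * η / (m / (2 * k)) := by
          apply div_le_div_of_nonneg_left (by linarith) (by positivity) hi
      _ = 4 * k * η / m := by field_simp; ring
      _ ≤ 8 * k * η / m := by gcongr <;> nlinarith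
  · push_neg at hbig
    have hc0 : m ≤ |c0| := by
      rcases hc with h | ⟨i, hi⟩
      · exact h
      · exfalso
        have h1 := hbig i
        have h2 : m / (2 * k) ≤ m / 2 :=
          div_le_div_of_nonneg_left hm.le (by norm_num) (by nlinarith)
        linarith
    by_cases hsmall : η < m / 2
    · have hemp : {s : Fin k → ℝ | (∀ i, s i ∈ Set.Icc (0:ℝ) 1) ∧ |c0 + ∑ i, c i * s i| ≤ η}
          ⊆ (∅ : Set (Fin k → ℝ)) := by
        rintro s ⟨hs1, hs2⟩
        exfalso
        have hsum : |∑ i, c i * s i| ≤ m / 2 := by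
          calc |∑ i, c i * s i| ≤ ∑ i, |c i * s i| := Finset.abs_sum_le_sum_abs _ _
            _ ≤ ∑ _i : Fin k, m / (2 * k) := by
                apply Finset.sum_le_sum
                intro i _
                rw [abs_mul]
                have h1 : |s i| ≤ 1 := by
                  rw [abs_le]; exact ⟨by linarith [(hs1 i).1], (hs1 i).2⟩
                nlinarith [abs_nonneg (c i), (hbig i).le]
            _ = m / 2 := by
                rw [Finset.sum_const, Finset.card_univ, Fintype.card_fin, nsmul_eq_mul]
                field_simp
        have htri : |c0| ≤ |c0 + ∑ i, c i * s i| + |∑ i, c i * s i| := by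
          have := abs_add_le (c0 + ∑ i, c i * s i) (-(∑ i, c i * s i))
          simpa using this
        linarith
      calc volume _ ≤ volume (∅ : Set (Fin k → ℝ)) := measure_mono hemp
        _ = 0 := measure_empty
        _ ≤ _ := by simp
    · push_neg at hsmall
      have hcube : volume {s : Fin k → ℝ | ∀ i, s i ∈ Set.Icc (0:ℝ) 1} = 1 := by
        have he : {s : Fin k → ℝ | ∀ i, s i ∈ Set.Icc (0:ℝ) 1} =
            Set.pi Set.univ fun _ => Set.Icc (0:ℝ) 1 := by
          ext s
          simp only [Set.mem_setOf_eq, Set.mem_pi, Set.mem_univ, true_implies]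
        rw [he, volume_pi_pi]
        simp [Real.volume_Icc]
      calc volume {s : Fin k → ℝ | (∀ i, s i ∈ Set.Icc (0:ℝ) 1) ∧ |c0 + ∑ i, c i * s i| ≤ η}
          ≤ volume {s : Fin k → ℝ | ∀ i, s i ∈ Set.Icc (0:ℝ) 1} :=
            measure_mono fun s hs => hs.1
        _ = 1 := hcube
        _ ≤ ENNReal.ofReal (8 * k * η / m) := by
            rw [show (1 : ℝ≥0∞) = ENNReal.ofReal 1 by simp]
            apply ENNReal.ofReal_le_ofReal
            rw [le_div_iff₀ hm]
            nlinarith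

/-- Auxiliary: volume of a measurable "graph neighborhood" over a base set `B`. -/
lemma volume_graph_nbhd {k nk : ℕ} (f : (Fin k → ℝ) → (Fin nk → ℝ)) (hf : Measurable f)
    (B : Set (Fin k → ℝ)) (hB : MeasurableSet B) (ε : ℝ) :
    volume {p : (Fin k → ℝ) × (Fin nk → ℝ) | p.1 ∈ B ∧ ∀ j, |p.2 j - f p.1 j| ≤ ε} =
      volume B * ENNReal.ofReal (2 * ε) ^ nk := by
  have hmp : MeasurePreserving (fun p : (Fin k → ℝ) × (Fin nk → ℝ) => (p.1, p.2 - f p.1))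
      volume volume := by
    rw [Measure.volume_eq_prod]
    exact MeasurePreserving.skew_product (g := fun s y => y - f s)
      (MeasurePreserving.id volume)
      (measurable_snd.sub (hf.comp measurable_fst))
      (Filter.Eventually.of_forall fun a => by
        simpa [sub_eq_add_neg] using
          map_add_right_eq_self (volume : Measure (Fin nk → ℝ)) (-f a))
  have hset : {p : (Fin k → ℝ) × (Fin nk → ℝ) | p.1 ∈ B ∧ ∀ j, |p.2 j - f p.1 j| ≤ ε} =
      (fun p : (Fin k → ℝ) × (Fin nk → ℝ) => (p.1, p.2 - f p.1)) ⁻¹'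
        (B ×ˢ Set.pi Set.univ fun _ => Set.Icc (-ε) ε) := by
    ext p
    simp only [Set.mem_setOf_eq, Set.mem_preimage, Set.mem_prod, Set.mem_pi, Set.mem_univ,
      true_implies, Pi.sub_apply, Set.mem_Icc]
    constructor
    · rintro ⟨h1, h2⟩
      exact ⟨h1, fun j => abs_le.1 (h2 j)⟩
    · rintro ⟨h1, h2⟩
      exact ⟨h1, fun j => abs_le.2 (h2 j)⟩
  have hms : MeasurableSet (B ×ˢ Set.pi Set.univ fun _ : Fin nk => Set.Icc (-ε) ε) :=
    hB.prod (MeasurableSet.univ_pi fun _ => measurableSet_Icc)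
  rw [hset, hmp.measure_preimage hms.nullMeasurableSet, Measure.volume_eq_prod,
    Measure.prod_prod, volume_pi_pi]
  congr 1
  simp only [Real.volume_Icc, Finset.prod_const, Finset.card_univ, Fintype.card_fin]
  congr 1
  ring

theorem volume_inter_thickenings_le
    (n k : ℕ) (hk : 1 ≤ k) (hkn : k < n) :
    ∃ C : ℝ, 0 < C ∧
      ∀ x x' : (Fin (n - k) → ℝ) × (Fin k → Fin (n - k) → ℝ),
        admissibleCode n k x → admissibleCode n k x' →
        ∀ δ : ℝ, 0 < δ → δ ≤ 1 →
          volume (Metric.thickening δ (affGraph n k x) ∩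
              Metric.thickening δ (affGraph n k x') ∩ simplexCube n k) ≤
            ENNReal.ofReal (C * δ ^ (n - k + 1) / (dist x x' + δ)) := by
  classical
  have hk1 : (1:ℝ) ≤ (k:ℝ) := by exact_mod_cast hk
  have hk0 : (0:ℝ) < (k:ℝ) := by linarith
  haveI : Nonempty (Fin k) := ⟨⟨0, by omega⟩⟩
  haveI : Nonempty (Fin (n - k)) := ⟨⟨0, by omega⟩⟩
  refine ⟨32 * k * (k+1) * (2*(k+1)) ^ (n - k), by positivity, ?_⟩
  intro x x' hx hx' δ hδ0 hδ1
  set d := dist x x' with hd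
  have hd0 : 0 ≤ d := dist_nonneg
  set ε : ℝ := (k+1) * δ with hε
  have hε0 : 0 < ε := by positivity
  -- uniform bound on coefficients of admissible codes
  have hbb : ∀ y : (Fin (n - k) → ℝ) × (Fin k → Fin (n - k) → ℝ), admissibleCode n k y →
      ∀ i j, |y.2 i j| ≤ 1 := by
    intro y hy i j
    have h1 := hy.1 j
    have h2 := hy.2 i j
    have : y.2 i j = (y.1 j + y.2 i j) - y.1 j := by ring
    rw [this]
    calc |(y.1 j + y.2 i j) - y.1 j| ≤ |y.1 j + y.2 i j| + |y.1 j| := abs_sub _ _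
      _ ≤ 1 := by linarith
  -- key estimate: points of the thickening are close to the graph over their own base point
  have key : ∀ y : (Fin (n - k) → ℝ) × (Fin k → Fin (n - k) → ℝ), admissibleCode n k y →
      ∀ p : (Fin k → ℝ) × (Fin (n - k) → ℝ), p ∈ Metric.thickening δ (affGraph n k y) →
      ∀ j, |p.2 j - (y.1 j + ∑ i, p.1 i * y.2 i j)| ≤ ε := by
    intro y hy p hp j
    rw [Metric.mem_thickening_iff] at hp
    obtain ⟨q, hq, hdist⟩ := hp
    obtain ⟨t, rfl⟩ := hq
    rw [Prod.dist_eq] at hdist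
    have h1 : dist p.1 t < δ := lt_of_le_of_lt (le_max_left _ _) hdist
    have h2 : dist p.2 (y.1 + ∑ i, t i • y.2 i) < δ := lt_of_le_of_lt (le_max_right _ _) hdist
    have h2j : |p.2 j - (y.1 j + ∑ i, t i * y.2 i j)| ≤ δ := by
      have := dist_le_pi_dist p.2 (y.1 + ∑ i, t i • y.2 i) j
      rw [Real.dist_eq] at this
      have happ : (y.1 + ∑ i, t i • y.2 i) j = y.1 j + ∑ i, t i * y.2 i j := by
        simp [Finset.sum_apply]
      rw [happ] at this
      linarith
    have h1i : ∀ i, |t i - p.1 i| ≤ δ := by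
      intro i
      have := dist_le_pi_dist p.1 t i
      rw [Real.dist_eq] at this
      rw [abs_sub_comm]
      linarith
    have heq : p.2 j - (y.1 j + ∑ i, p.1 i * y.2 i j) =
        (p.2 j - (y.1 j + ∑ i, t i * y.2 i j)) + ∑ i, (t i - p.1 i) * y.2 i j := by
      rw [Finset.sum_congr rfl (fun i _ => sub_mul (t i) (p.1 i) (y.2 i j)),
        Finset.sum_sub_distrib]
      ring
    rw [heq]
    calc |(p.2 j - (y.1 j + ∑ i, t i * y.2 i j)) + ∑ i, (t i - p.1 i) * y.2 i j|
        ≤ |p.2 j - (y.1 j + ∑ i, t i * y.2 i j)| + |∑ i, (t i - p.1 i) * y.2 i j| := abs_add_le _ _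
      _ ≤ δ + ∑ i, |(t i - p.1 i) * y.2 i j| := by
          gcongr
          exact Finset.abs_sum_le_sum_abs _ _
      _ ≤ δ + ∑ _i : Fin k, δ := by
          gcongr δ + ?_
          apply Finset.sum_le_sum
          intro i _
          rw [abs_mul]
          have := hbb y hy i j
          nlinarith [abs_nonneg (t i - p.1 i), h1i i]
      _ = (1 + k) * δ := by
          rw [Finset.sum_const, Finset.card_univ, Fintype.card_fin, nsmul_eq_mul]
          ring
      _ = ε := by rw [hε]; ring
  -- choose the best coordinate j*
  set Mf : Fin (n - k) → ℝ := fun j =>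
    max |x.1 j - x'.1 j| (Finset.univ.sup' Finset.univ_nonempty fun i => |x.2 i j - x'.2 i j|)
    with hMf
  obtain ⟨js, -, hjs⟩ := Finset.exists_max_image Finset.univ Mf Finset.univ_nonempty
  set m : ℝ := Mf js with hm
  have hMnonneg : 0 ≤ m := by
    have j0 : Fin (n - k) := Classical.arbitrary _
    exact le_trans (abs_nonneg (x.1 j0 - x'.1 j0))
      (le_trans (le_max_left _ _) (hjs j0 (Finset.mem_univ j0)))
  have hdm : d ≤ m := by
    rw [hd, Prod.dist_eq]
    apply max_le
    · rw [dist_pi_le_iff hMnonneg]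
      intro j
      rw [Real.dist_eq]
      exact le_trans (le_max_left _ _) (hjs j (Finset.mem_univ j))
    · rw [dist_pi_le_iff hMnonneg]
      intro i
      rw [dist_pi_le_iff hMnonneg]
      intro j
      rw [Real.dist_eq]
      refine le_trans ?_ (hjs j (Finset.mem_univ j))
      refine le_trans ?_ (le_max_right _ _)
      exact Finset.le_sup' (fun i => |x.2 i j - x'.2 i j|) (Finset.mem_univ i)
  set c0 : ℝ := x.1 js - x'.1 js with hc0def
  set c : Fin k → ℝ := fun i => x.2 i js - x'.2 i js with hcdef
  have hcm : m ≤ |c0| ∨ ∃ i, m ≤ |c i| := by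
    rcases max_choice |x.1 js - x'.1 js|
        (Finset.univ.sup' Finset.univ_nonempty fun i => |x.2 i js - x'.2 i js|) with h | h
    · left; rw [hm, hMf]; simp only; rw [h]
    · right
      obtain ⟨i, -, hi⟩ := Finset.exists_mem_eq_sup' Finset.univ_nonempty
        (fun i => |x.2 i js - x'.2 i js|)
      exact ⟨i, by rw [hm, hMf]; simp only; rw [h, hi]⟩
  -- the base bad set
  set B : Set (Fin k → ℝ) :=
    {s : Fin k → ℝ | (∀ i, s i ∈ Set.Icc (0:ℝ) 1) ∧ |c0 + ∑ i, c i * s i| ≤ 2 * ε} with hB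
  have hBmeas : MeasurableSet B := by
    rw [hB, Set.setOf_and]
    apply MeasurableSet.inter
    · have : {s : Fin k → ℝ | ∀ i, s i ∈ Set.Icc (0:ℝ) 1} =
          Set.pi Set.univ fun _ => Set.Icc (0:ℝ) 1 := by
        ext s; simp only [Set.mem_setOf_eq, Set.mem_pi, Set.mem_univ, true_implies]
      rw [this]
      exact MeasurableSet.univ_pi fun _ => measurableSet_Icc
    · have hcont : Continuous fun s : Fin k → ℝ => c0 + ∑ i, c i * s i :=
        continuous_const.add (continuous_finset_sum _ fun i _ =>
          (continuous_const.mul (continuous_apply i)))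
      have hset : {s : Fin k → ℝ | |c0 + ∑ i, c i * s i| ≤ 2 * ε} =
          (fun s : Fin k → ℝ => c0 + ∑ i, c i * s i) ⁻¹' Set.Icc (-(2*ε)) (2*ε) := by
        ext s
        simp [abs_le]
      rw [hset]
      exact hcont.measurable measurableSet_Icc
  -- the small cube has volume one
  have hcube1 : volume {s : Fin k → ℝ | ∀ i, s i ∈ Set.Icc (0:ℝ) 1} = 1 := by
    have he : {s : Fin k → ℝ | ∀ i, s i ∈ Set.Icc (0:ℝ) 1} =
        Set.pi Set.univ fun _ => Set.Icc (0:ℝ) 1 := by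
      ext s; simp only [Set.mem_setOf_eq, Set.mem_pi, Set.mem_univ, true_implies]
    rw [he, volume_pi_pi]
    simp [Real.volume_Icc]
  -- the graph function
  set f : (Fin k → ℝ) → (Fin (n - k) → ℝ) := fun s j => x.1 j + ∑ i, s i * x.2 i j with hf
  have hfm : Measurable f := by
    apply measurable_pi_lambda
    intro j
    exact measurable_const.add (Finset.measurable_sum _ fun i _ =>
      (measurable_pi_apply i).mul measurable_const)
  -- inclusion of the target set in a graph neighborhood over B
  have hsub : Metric.thickening δ (affGraph n k x) ∩ Metric.thickening δ (affGraph n k x') ∩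
      simplexCube n k ⊆
      {p : (Fin k → ℝ) × (Fin (n - k) → ℝ) | p.1 ∈ B ∧ ∀ j, |p.2 j - f p.1 j| ≤ ε} := by
    rintro p ⟨⟨hp1, hp2⟩, hpS⟩
    have hcube : ∀ i, p.1 i ∈ Set.Icc (0:ℝ) 1 := by
      have hconv : Convex ℝ {s : Fin k → ℝ | ∀ i, s i ∈ Set.Icc (0:ℝ) 1} := by
        have he : {s : Fin k → ℝ | ∀ i, s i ∈ Set.Icc (0:ℝ) 1} =
            Set.pi Set.univ fun _ => Set.Icc (0:ℝ) 1 := by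
          ext s; simp only [Set.mem_setOf_eq, Set.mem_pi, Set.mem_univ, true_implies]
        rw [he]
        exact convex_pi fun i _ => convex_Icc 0 1
      have hptsin : insert 0 (Set.range fun i : Fin k => (Pi.single i 1 : Fin k → ℝ)) ⊆
          {s : Fin k → ℝ | ∀ i, s i ∈ Set.Icc (0:ℝ) 1} := by
        rintro s hs
        rcases hs with rfl | ⟨i, rfl⟩
        · intro i; simp
        · intro i'
          rw [Set.mem_Icc]
          simp only [Pi.single_apply]
          split <;> norm_num
      exact convexHull_min hptsin hconv hpS.1
    have h1 := key x hx p hp1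
    have h2 := key x' hx' p hp2
    refine ⟨⟨hcube, ?_⟩, h1⟩
    have heq : c0 + ∑ i, c i * p.1 i =
        (x.1 js + ∑ i, p.1 i * x.2 i js) - (x'.1 js + ∑ i, p.1 i * x'.2 i js) := by
      have hterm : ∀ i ∈ Finset.univ, c i * p.1 i =
          p.1 i * x.2 i js - p.1 i * x'.2 i js := by
        intro i _
        rw [hcdef]
        ring
      rw [Finset.sum_congr rfl hterm, Finset.sum_sub_distrib, hc0def]
      ring
    rw [heq]
    calc |(x.1 js + ∑ i, p.1 i * x.2 i js) - (x'.1 js + ∑ i, p.1 i * x'.2 i js)|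
        ≤ |(x.1 js + ∑ i, p.1 i * x.2 i js) - p.2 js| +
          |p.2 js - (x'.1 js + ∑ i, p.1 i * x'.2 i js)| := abs_sub_le _ _ _
      _ ≤ ε + ε := by
          have ha := h1 js
          have hb := h2 js
          rw [abs_sub_comm] at ha
          exact add_le_add ha hb
      _ = 2 * ε := by ring
  have hmain : volume (Metric.thickening δ (affGraph n k x) ∩
      Metric.thickening δ (affGraph n k x') ∩ simplexCube n k) ≤
      volume B * ENNReal.ofReal (2 * ε) ^ (n - k) := by
    calc volume (Metric.thickening δ (affGraph n k x) ∩
        Metric.thickening δ (affGraph n k x') ∩ simplexCube n k)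
        ≤ volume {p : (Fin k → ℝ) × (Fin (n - k) → ℝ) | p.1 ∈ B ∧ ∀ j, |p.2 j - f p.1 j| ≤ ε} :=
          measure_mono hsub
      _ = volume B * ENNReal.ofReal (2 * ε) ^ (n - k) := volume_graph_nbhd f hfm B hBmeas ε
  have h2ε : 2 * ε = 2 * ((k:ℝ) + 1) * δ := by rw [hε]; ring
  have h2ε0 : (0:ℝ) ≤ 2 * ε := by positivity
  rcases le_or_gt d δ with hcase | hcase
  · -- small distance: use the trivial bound volume B ≤ 1
    have hB1 : volume B ≤ 1 := by
      rw [← hcube1]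
      exact measure_mono fun s hs => hs.1
    refine le_trans hmain ?_
    calc volume B * ENNReal.ofReal (2 * ε) ^ (n - k)
        ≤ 1 * ENNReal.ofReal (2 * ε) ^ (n - k) := mul_le_mul_left hB1 _
      _ = ENNReal.ofReal ((2 * ε) ^ (n - k)) := by
          rw [one_mul, ← ENNReal.ofReal_pow h2ε0]
      _ ≤ ENNReal.ofReal (32 * k * (k+1) * (2*(k+1)) ^ (n - k) * δ ^ (n - k + 1) / (d + δ)) := by
          apply ENNReal.ofReal_le_ofReal
          have hstep1 : (2 * ε) ^ (n - k) = (2 * ((k:ℝ) + 1)) ^ (n - k) * δ ^ (n - k) := by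
            rw [h2ε, mul_pow]
          have hstep2 : 32 * (k:ℝ) * (k+1) * (2*(k+1)) ^ (n - k) * δ ^ (n - k + 1) / (2 * δ) =
              16 * k * (k+1) * (2*((k:ℝ)+1)) ^ (n - k) * δ ^ (n - k) := by
            rw [pow_succ]
            field_simp
            ring
          have hstep3 : 32 * (k:ℝ) * (k+1) * (2*(k+1)) ^ (n - k) * δ ^ (n - k + 1) / (2 * δ) ≤
              32 * k * (k+1) * (2*(k+1)) ^ (n - k) * δ ^ (n - k + 1) / (d + δ) := by
            apply div_le_div_of_nonneg_left (by positivity) (by linarith) (by linarith)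
          rw [hstep1]
          refine le_trans ?_ hstep3
          rw [hstep2]
          have hone : (1:ℝ) ≤ 16 * k * (k+1) := by nlinarith
          nlinarith [pow_nonneg (show (0:ℝ) ≤ 2*((k:ℝ)+1) by positivity) (n - k),
            pow_nonneg hδ0.le (n - k),
            mul_nonneg (pow_nonneg (show (0:ℝ) ≤ 2*((k:ℝ)+1) by positivity) (n - k))
              (pow_nonneg hδ0.le (n - k))]
  · -- large distance: use the bad-set bound
    have hm0 : 0 < m := lt_of_lt_of_le (lt_trans hδ0 hcase) hdm
    have hB2 := measure_B_le hk c0 c m (2 * ε) hm0 h2ε0 hcm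
    refine le_trans hmain ?_
    calc volume B * ENNReal.ofReal (2 * ε) ^ (n - k)
        ≤ ENNReal.ofReal (8 * k * (2 * ε) / m) * ENNReal.ofReal (2 * ε) ^ (n - k) :=
          mul_le_mul_left hB2 _
      _ = ENNReal.ofReal (8 * k * (2 * ε) / m * (2 * ε) ^ (n - k)) := by
          rw [← ENNReal.ofReal_pow h2ε0, ← ENNReal.ofReal_mul (by positivity)]
      _ ≤ ENNReal.ofReal (32 * k * (k+1) * (2*(k+1)) ^ (n - k) * δ ^ (n - k + 1) / (d + δ)) := by
          apply ENNReal.ofReal_le_ofReal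
          have hLHSeq : 8 * (k:ℝ) * (2 * ε) / m * (2 * ε) ^ (n - k) =
              16 * k * (k+1) * (2*((k:ℝ)+1)) ^ (n - k) * δ ^ (n - k + 1) / m := by
            rw [h2ε, mul_pow, pow_succ]
            field_simp
            ring
          rw [hLHSeq]
          rw [div_le_div_iff₀ hm0 (by linarith)]
          have hA0 : (0:ℝ) ≤ 16 * k * (k+1) * (2*((k:ℝ)+1)) ^ (n - k) * δ ^ (n - k + 1) := by
            positivity
          nlinarith [mul_le_mul_of_nonneg_left (show d + δ ≤ 2 * m by linarith) hA0]
end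

section
/- Let 1 ≤ k < n be integers. There is a constant D = D(n,k) > 0 such that for all admissible codes x = (a, b¹,…,b^k) and x' = (a', b'¹,…,b'^k) and all 0 < δ ≤ 1: if ‖a−a'‖_∞ > max_{1≤i≤k} ‖bⁱ−b'ⁱ‖_∞ + D·δ, then the open δ-neighborhoods of P(x) and P(x') are disjoint inside S, i.e. P(x)_δ ∩ P(x')_δ ∩ S = ∅. -/
open scoped ENNReal
open MeasureTheory

lemma simplex_facts {k : ℕ} {s : Fin k → ℝ}
    (hs : s ∈ convexHull ℝ
      (insert 0 (Set.range fun i : Fin k => (Pi.single i 1 : Fin k → ℝ)))) :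
    (∀ i, 0 ≤ s i) ∧ ∑ i, s i ≤ 1 := by
  have hconv : Convex ℝ {s : Fin k → ℝ | (∀ i, 0 ≤ s i) ∧ ∑ i, s i ≤ 1} := by
    rintro u ⟨hu1, hu2⟩ v ⟨hv1, hv2⟩ a b ha hb hab
    refine ⟨fun i => ?_, ?_⟩
    · have := hu1 i; have := hv1 i
      simp only [Pi.add_apply, Pi.smul_apply, smul_eq_mul]
      positivity
    · simp only [Pi.add_apply, Pi.smul_apply, smul_eq_mul, Finset.sum_add_distrib,
        ← Finset.mul_sum]
      nlinarith
  have hsub : insert 0 (Set.range fun i : Fin k => (Pi.single i 1 : Fin k → ℝ))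
      ⊆ {s : Fin k → ℝ | (∀ i, 0 ≤ s i) ∧ ∑ i, s i ≤ 1} := by
    rintro s (rfl | ⟨i, rfl⟩)
    · exact ⟨fun i => le_refl 0, by simp⟩
    · refine ⟨fun j => ?_, ?_⟩
      · rcases eq_or_ne j i with rfl | h
        · simp
        · simp [Pi.single_apply, h]
      · simp [Pi.single_apply]
  exact convexHull_min hsub hconv hs

theorem thickenings_disjoint_of_far_intercepts
    (n k : ℕ) (hk : 1 ≤ k) (hkn : k < n) :
    ∃ D : ℝ, 0 < D ∧
      ∀ x x' : (Fin (n - k) → ℝ) × (Fin k → Fin (n - k) → ℝ),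
        admissibleCode n k x → admissibleCode n k x' →
        ∀ δ : ℝ, 0 < δ → δ ≤ 1 →
          dist x.1 x'.1 > dist x.2 x'.2 + D * δ →
          Metric.thickening δ (affGraph n k x) ∩
            Metric.thickening δ (affGraph n k x') ∩ simplexCube n k = ∅ := by
  refine ⟨4 * k + 2, by positivity, ?_⟩
  intro x x' hx hx' δ hδ hδ1 hfar
  rw [Set.eq_empty_iff_forall_notMem]
  rintro p ⟨⟨hp1, hp2⟩, hpS⟩
  rw [Metric.mem_thickening_iff] at hp1 hp2
  obtain ⟨q, ⟨t, rfl⟩, hq⟩ := hp1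
  obtain ⟨q', ⟨t', rfl⟩, hq'⟩ := hp2
  rw [Prod.dist_eq, max_lt_iff] at hq hq'
  obtain ⟨hqt, hqa⟩ := hq
  obtain ⟨hqt', hqa'⟩ := hq'
  obtain ⟨hs0, hs1⟩ := simplex_facts hpS.1
  have hdbb : 0 ≤ dist x.2 x'.2 := dist_nonneg
  -- coordinatewise bounds on b, b'
  have hb1 : ∀ i j, |x.2 i j| ≤ 1 := by
    intro i j
    have h1 := hx.1 j; have h2 := hx.2 i j
    have : x.2 i j = (x.1 j + x.2 i j) - x.1 j := by ring
    rw [this]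
    calc |(x.1 j + x.2 i j) - x.1 j| ≤ |x.1 j + x.2 i j| + |x.1 j| := abs_sub _ _
    _ ≤ 1 := by linarith
  have hb1' : ∀ i j, |x'.2 i j| ≤ 1 := by
    intro i j
    have h1 := hx'.1 j; have h2 := hx'.2 i j
    have : x'.2 i j = (x'.1 j + x'.2 i j) - x'.1 j := by ring
    rw [this]
    calc |(x'.1 j + x'.2 i j) - x'.1 j| ≤ |x'.1 j + x'.2 i j| + |x'.1 j| := abs_sub _ _
    _ ≤ 1 := by linarith
  have hbb : ∀ i j, |x.2 i j - x'.2 i j| ≤ dist x.2 x'.2 := by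
    intro i j
    have h1 : dist (x.2 i) (x'.2 i) ≤ dist x.2 x'.2 := dist_le_pi_dist _ _ i
    have h2 : dist (x.2 i j) (x'.2 i j) ≤ dist (x.2 i) (x'.2 i) := dist_le_pi_dist _ _ j
    rw [Real.dist_eq] at h2
    linarith
  have hdbb2 : dist x.2 x'.2 ≤ 2 := by
    rw [dist_pi_le_iff (by norm_num : (0:ℝ) ≤ 2)]
    intro i
    rw [dist_pi_le_iff (by norm_num : (0:ℝ) ≤ 2)]
    intro j
    rw [Real.dist_eq]
    have := hb1 i j; have := hb1' i j
    have := abs_sub (x.2 i j) (x'.2 i j)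
    linarith
  -- bounds on t, t'
  have ht : ∀ i, |t i| ≤ p.1 i + δ := by
    intro i
    have h1 : dist (p.1 i) (t i) ≤ dist p.1 t := dist_le_pi_dist _ _ i
    rw [Real.dist_eq] at h1
    have := abs_abs_sub_abs_le_abs_sub (t i) (p.1 i)
    have h2 := abs_sub_abs_le_abs_sub (t i) (p.1 i)
    have h3 : |p.1 i| = p.1 i := abs_of_nonneg (hs0 i)
    have h4 : |t i - p.1 i| = |p.1 i - t i| := abs_sub_comm _ _
    linarith
  have htt' : ∀ i, |t i - t' i| ≤ 2 * δ := by
    intro i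
    have h1 : dist (p.1 i) (t i) ≤ dist p.1 t := dist_le_pi_dist _ _ i
    have h2 : dist (p.1 i) (t' i) ≤ dist p.1 t' := dist_le_pi_dist _ _ i
    rw [Real.dist_eq] at h1 h2
    have := abs_sub (t i - p.1 i) (t' i - p.1 i)
    have e : t i - t' i = (t i - p.1 i) - (t' i - p.1 i) := by ring
    rw [e]
    have h4 : |t i - p.1 i| = |p.1 i - t i| := abs_sub_comm _ _
    have h5 : |t' i - p.1 i| = |p.1 i - t' i| := abs_sub_comm _ _
    calc |(t i - p.1 i) - (t' i - p.1 i)| ≤ |t i - p.1 i| + |t' i - p.1 i| := abs_sub _ _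
    _ ≤ 2 * δ := by rw [h4, h5]; linarith
  -- sum of |t i| bound
  have hsumt : ∑ i, |t i| ≤ 1 + k * δ := by
    calc ∑ i, |t i| ≤ ∑ i, (p.1 i + δ) := Finset.sum_le_sum fun i _ => ht i
    _ = (∑ i, p.1 i) + k * δ := by
        rw [Finset.sum_add_distrib]; simp [mul_comm]
    _ ≤ 1 + k * δ := by linarith
  -- key coordinatewise estimate
  have key : ∀ j, |x.1 j - x'.1 j| ≤ dist x.2 x'.2 + (4 * k + 2) * δ := by
    intro j
    have hA : |p.2 j - (x.1 j + ∑ i, t i * x.2 i j)| < δ := by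
      have h1 : dist (p.2 j) ((x.1 + ∑ i, t i • x.2 i) j) ≤ dist p.2 (x.1 + ∑ i, t i • x.2 i) :=
        dist_le_pi_dist _ _ j
      have h2 : (x.1 + ∑ i, t i • x.2 i) j = x.1 j + ∑ i, t i * x.2 i j := by
        simp [Finset.sum_apply]
      rw [Real.dist_eq, h2] at h1
      linarith
    have hA' : |p.2 j - (x'.1 j + ∑ i, t' i * x'.2 i j)| < δ := by
      have h1 : dist (p.2 j) ((x'.1 + ∑ i, t' i • x'.2 i) j)
          ≤ dist p.2 (x'.1 + ∑ i, t' i • x'.2 i) := dist_le_pi_dist _ _ j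
      have h2 : (x'.1 + ∑ i, t' i • x'.2 i) j = x'.1 j + ∑ i, t' i * x'.2 i j := by
        simp [Finset.sum_apply]
      rw [Real.dist_eq, h2] at h1
      linarith
    have hsum1 : |∑ i, t i * (x'.2 i j - x.2 i j)| ≤ (1 + k * δ) * dist x.2 x'.2 := by
      calc |∑ i, t i * (x'.2 i j - x.2 i j)| ≤ ∑ i, |t i * (x'.2 i j - x.2 i j)| :=
              Finset.abs_sum_le_sum_abs _ _
      _ ≤ ∑ i, |t i| * dist x.2 x'.2 := by
            refine Finset.sum_le_sum fun i _ => ?_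
            rw [abs_mul]
            have h := hbb i j
            have h2 : |x'.2 i j - x.2 i j| = |x.2 i j - x'.2 i j| := abs_sub_comm _ _
            exact mul_le_mul_of_nonneg_left (by linarith) (abs_nonneg _)
      _ = (∑ i, |t i|) * dist x.2 x'.2 := by rw [Finset.sum_mul]
      _ ≤ (1 + k * δ) * dist x.2 x'.2 := mul_le_mul_of_nonneg_right hsumt hdbb
    have hsum2 : |∑ i, (t' i - t i) * x'.2 i j| ≤ 2 * k * δ := by
      calc |∑ i, (t' i - t i) * x'.2 i j| ≤ ∑ i, |(t' i - t i) * x'.2 i j| :=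
              Finset.abs_sum_le_sum_abs _ _
      _ ≤ ∑ _i : Fin k, 2 * δ := by
            refine Finset.sum_le_sum fun i _ => ?_
            rw [abs_mul]
            have h1 := htt' i
            have h2 := hb1' i j
            have h3 : |t' i - t i| = |t i - t' i| := abs_sub_comm _ _
            nlinarith [abs_nonneg (t' i - t i), abs_nonneg (x'.2 i j)]
      _ = 2 * k * δ := by simp; ring
    have hsplit : x.1 j - x'.1 j =
        (p.2 j - (x'.1 j + ∑ i, t' i * x'.2 i j)) - (p.2 j - (x.1 j + ∑ i, t i * x.2 i j))
        + (∑ i, t i * (x'.2 i j - x.2 i j)) + (∑ i, (t' i - t i) * x'.2 i j) := by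
      have : ∑ i, t i * (x'.2 i j - x.2 i j) + ∑ i, (t' i - t i) * x'.2 i j
          = ∑ i, t' i * x'.2 i j - ∑ i, t i * x.2 i j := by
        rw [← Finset.sum_add_distrib, ← Finset.sum_sub_distrib]
        congr 1; funext i; ring
      linarith [this]
    have habs : |x.1 j - x'.1 j| ≤
        |p.2 j - (x'.1 j + ∑ i, t' i * x'.2 i j)| + |p.2 j - (x.1 j + ∑ i, t i * x.2 i j)|
        + |∑ i, t i * (x'.2 i j - x.2 i j)| + |∑ i, (t' i - t i) * x'.2 i j| := by
      rw [hsplit]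
      calc _ ≤ |(p.2 j - (x'.1 j + ∑ i, t' i * x'.2 i j)) - (p.2 j - (x.1 j + ∑ i, t i * x.2 i j))
              + (∑ i, t i * (x'.2 i j - x.2 i j))| + |∑ i, (t' i - t i) * x'.2 i j| :=
                abs_add_le _ _
      _ ≤ _ := by
            gcongr
            calc _ ≤ |(p.2 j - (x'.1 j + ∑ i, t' i * x'.2 i j))
                    - (p.2 j - (x.1 j + ∑ i, t i * x.2 i j))|
                  + |∑ i, t i * (x'.2 i j - x.2 i j)| := abs_add_le _ _
            _ ≤ _ := by gcongr; exact abs_sub _ _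
    have hkd : (k : ℝ) * δ * dist x.2 x'.2 ≤ 2 * k * δ := by
      have hk0 : (0:ℝ) ≤ (k:ℝ) * δ := by positivity
      nlinarith
    nlinarith [habs, hsum1, hsum2, hA, hA']
  have hfinal : dist x.1 x'.1 ≤ dist x.2 x'.2 + (4 * k + 2) * δ := by
    rw [dist_pi_le_iff (by positivity)]
    intro j
    rw [Real.dist_eq]
    exact key j
  linarith
end

section
/- Let 1 ≤ k < n be integers. There is a constant C = C(n,k) > 0 such that for all admissible codes x = (a, b¹,…,b^k) and x' = (a', b'¹,…,b'^k) with (b¹,…,b^k) ≠ (b'¹,…,b'^k), and all 0 < δ ≤ 1, L^n(P(x)_δ ∩ P(x')_δ ∩ S) ≤ C · δ^{n−k+1} / max_{1≤i≤k} ‖bⁱ−b'ⁱ‖_∞. -/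
open scoped ENNReal
open MeasureTheory

/-- Volume of a slab `{s : |β + s c| ≤ ε}` in `ℝ`. -/
lemma slab_volume_le (c β ε : ℝ) (hc : c ≠ 0) :
    volume {s : ℝ | |β + s * c| ≤ ε} ≤ ENNReal.ofReal (2 * ε / |c|) := by
  rcases hc.lt_or_gt with h | h
  · have hsub : {s : ℝ | |β + s * c| ≤ ε} ⊆ Set.Icc ((ε - β) / c) ((-ε - β) / c) := by
      intro s hs
      rw [Set.mem_setOf_eq, abs_le] at hs
      constructor
      · rw [div_le_iff_of_neg h]; linarith [hs.2]
      · rw [le_div_iff_of_neg h]; linarith [hs.1]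
    refine (measure_mono hsub).trans ?_
    rw [Real.volume_Icc]
    apply ENNReal.ofReal_le_ofReal
    rw [abs_of_neg h]
    rw [div_sub_div_same, show (-ε - β) - (ε - β) = -(2 * ε) by ring, neg_div, div_neg]
  · have hsub : {s : ℝ | |β + s * c| ≤ ε} ⊆ Set.Icc ((-ε - β) / c) ((ε - β) / c) := by
      intro s hs
      rw [Set.mem_setOf_eq, abs_le] at hs
      constructor
      · rw [div_le_iff₀ h]; linarith [hs.1]
      · rw [le_div_iff₀ h]; linarith [hs.2]
    refine (measure_mono hsub).trans ?_
    rw [Real.volume_Icc]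
    apply ENNReal.ofReal_le_ofReal
    rw [abs_of_pos h]
    rw [div_sub_div_same, show (ε - β) - (-ε - β) = 2 * ε by ring]

/-- Volume of the part of the unit cube between two parallel hyperplanes. -/
lemma cube_slab_volume_le {k : ℕ} (c : Fin k → ℝ) (α : ℝ) (i0 : Fin k) (hc : c i0 ≠ 0)
    (ε : ℝ) :
    volume {t : Fin k → ℝ | (∀ i, t i ∈ Set.Icc (0:ℝ) 1) ∧ |α + ∑ i, t i * c i| ≤ ε}
      ≤ ENNReal.ofReal (2 * ε / |c i0|) := by
  set T : Set (Fin k → ℝ) :=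
    {t | (∀ i, t i ∈ Set.Icc (0:ℝ) 1) ∧ |α + ∑ i, t i * c i| ≤ ε} with hT_def
  have hcont : Continuous fun t : Fin k → ℝ => α + ∑ i, t i * c i :=
    continuous_const.add (continuous_finset_sum _ fun i _ =>
      (continuous_apply i).mul continuous_const)
  have hT1closed : IsClosed {t : Fin k → ℝ | ∀ i, t i ∈ Set.Icc (0:ℝ) 1} := by
    have h : {t : Fin k → ℝ | ∀ i, t i ∈ Set.Icc (0:ℝ) 1} =
        Set.pi Set.univ (fun _ => Set.Icc (0:ℝ) 1) := by
      ext t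
      simp only [Set.mem_setOf_eq, Set.mem_pi, Set.mem_univ, forall_true_left]
    rw [h]
    exact isClosed_set_pi fun i _ => isClosed_Icc
  have hTclosed : IsClosed T :=
    hT1closed.inter (isClosed_le (continuous_abs.comp hcont) continuous_const)
  have hT : MeasurableSet T := hTclosed.measurableSet
  classical
  letI : Fintype {i : Fin k // i = i0} := Unique.fintype
  letI : Fintype {i : Fin k // ¬ i = i0} := Subtype.fintype _
  let e : (Fin k → ℝ) ≃ᵐ ℝ × ({i : Fin k // ¬ i = i0} → ℝ) :=
    (MeasurableEquiv.piEquivPiSubtypeProd (fun _ : Fin k => ℝ) (fun i => i = i0)).trans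
      ((MeasurableEquiv.funUnique {i : Fin k // i = i0} ℝ).prodCongr
        (MeasurableEquiv.refl _))
  have hmp : MeasurePreserving e volume volume := by
    have h1 := volume_preserving_piEquivPiSubtypeProd (fun _ : Fin k => ℝ) (fun i => i = i0)
    have h2 : MeasurePreserving
        (Prod.map (MeasurableEquiv.funUnique {i : Fin k // i = i0} ℝ)
          (id : ({i : Fin k // ¬ i = i0} → ℝ) → ({i : Fin k // ¬ i = i0} → ℝ)))
        volume volume := by
      rw [Measure.volume_eq_prod, Measure.volume_eq_prod]
      exact (volume_preserving_funUnique {i : Fin k // i = i0} ℝ).prod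
        (MeasurePreserving.id (volume : Measure ({i : Fin k // ¬ i = i0} → ℝ)))
    have hfin : (Subtype.fintype fun i : Fin k => i = i0) =
        (Unique.fintype : Fintype {i : Fin k // i = i0}) := Subsingleton.elim _ _
    rw [hfin] at h1
    exact h2.comp h1
  have hsymm : ∀ (s : ℝ) (r : {i : Fin k // ¬ i = i0} → ℝ) (i : Fin k),
      e.symm (s, r) i = if hi : i = i0 then s else r ⟨i, hi⟩ := by
    intro s r i
    rfl
  have hpre : volume (e.symm ⁻¹' T) = volume T :=
    (hmp.symm e).measure_preimage hT.nullMeasurableSet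
  set B : Set (ℝ × ({i : Fin k // ¬ i = i0} → ℝ)) := e.symm ⁻¹' T with hB_def
  have hB : MeasurableSet B := e.symm.measurable hT
  set RC : Set ({i : Fin k // ¬ i = i0} → ℝ) :=
    Set.pi Set.univ (fun _ => Set.Icc (0:ℝ) 1) with hRC_def
  have hRC : MeasurableSet RC := MeasurableSet.univ_pi fun _ => measurableSet_Icc
  have hRCvol : volume RC = 1 := by
    rw [hRC_def, volume_pi_pi]
    simp [Real.volume_Icc]
  have hslice : ∀ r : {i : Fin k // ¬ i = i0} → ℝ,
      volume ((fun s => (s, r)) ⁻¹' B) ≤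
        RC.indicator (fun _ => ENNReal.ofReal (2 * ε / |c i0|)) r := by
    intro r
    by_cases hr : r ∈ RC
    · rw [Set.indicator_of_mem hr]
      set β : ℝ := α + ∑ i, (if hi : ¬ i = i0 then r ⟨i, hi⟩ else 0) * c i with hβ_def
      have hkey : ∀ s : ℝ, α + ∑ i, e.symm (s, r) i * c i = β + s * c i0 := by
        intro s
        have : ∀ i : Fin k, e.symm (s, r) i * c i =
            (if i = i0 then s * c i else 0) +
              (if hi : ¬ i = i0 then r ⟨i, hi⟩ else 0) * c i := by
          intro i
          rw [hsymm]
          by_cases hi : i = i0 <;> simp [hi]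
        rw [Finset.sum_congr rfl fun i _ => this i, Finset.sum_add_distrib,
          Finset.sum_ite_eq' Finset.univ i0 (fun i => s * c i)]
        simp [hβ_def]
        ring
      refine (measure_mono ?_).trans (slab_volume_le (c i0) β ε hc)
      intro s hs
      have hsT : e.symm (s, r) ∈ T := hs
      rw [Set.mem_setOf_eq, ← hkey s]
      exact hsT.2
    · rw [Set.indicator_of_notMem hr]
      have : (fun s => (s, r)) ⁻¹' B = ∅ := by
        ext s
        simp only [Set.mem_preimage, Set.mem_empty_iff_false, iff_false]
        intro hs
        have hsT : e.symm (s, r) ∈ T := hs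
        apply hr
        intro j _
        have := hsT.1 j.1
        rwa [hsymm, dif_neg j.2] at this
      rw [this, measure_empty]
  calc volume T = volume B := hpre.symm
    _ = ∫⁻ r, volume ((fun s => (s, r)) ⁻¹' B) := by
        rw [Measure.volume_eq_prod]
        exact Measure.prod_apply_symm hB
    _ ≤ ∫⁻ r, RC.indicator (fun _ => ENNReal.ofReal (2 * ε / |c i0|)) r :=
        lintegral_mono hslice
    _ = ENNReal.ofReal (2 * ε / |c i0|) * volume RC := lintegral_indicator_const hRC _
    _ = ENNReal.ofReal (2 * ε / |c i0|) := by rw [hRCvol, mul_one]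

theorem volume_inter_thickenings_le_of_different_slopes
    (n k : ℕ) (hk : 1 ≤ k) (hkn : k < n) :
    ∃ C : ℝ, 0 < C ∧
      ∀ x x' : (Fin (n - k) → ℝ) × (Fin k → Fin (n - k) → ℝ),
        admissibleCode n k x → admissibleCode n k x' →
        x.2 ≠ x'.2 →
        ∀ δ : ℝ, 0 < δ → δ ≤ 1 →
          volume (Metric.thickening δ (affGraph n k x) ∩
              Metric.thickening δ (affGraph n k x') ∩ simplexCube n k) ≤
            ENNReal.ofReal (C * δ ^ (n - k + 1) / dist x.2 x'.2) := by
  refine ⟨(2 * ((k:ℝ)+1))^(n-k) * (4 * ((k:ℝ)+1)), by positivity, ?_⟩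
  intro x x' hx hx' hne δ hδ hδ1
  set M := dist x.2 x'.2 with hM_def
  have hM : 0 < M := dist_pos.2 hne
  haveI : Nonempty (Fin k) := ⟨⟨0, hk⟩⟩
  haveI : Nonempty (Fin (n - k)) := ⟨⟨0, Nat.sub_pos_of_lt hkn⟩⟩
  obtain ⟨i0, -, hi0⟩ := Finset.exists_mem_eq_sup Finset.univ Finset.univ_nonempty
    (fun i => nndist (x.2 i) (x'.2 i))
  obtain ⟨j0, -, hj0⟩ := Finset.exists_mem_eq_sup Finset.univ Finset.univ_nonempty
    (fun j => nndist (x.2 i0 j) (x'.2 i0 j))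
  have hMj : M = |x.2 i0 j0 - x'.2 i0 j0| := by
    rw [hM_def, dist_nndist, nndist_pi_def, hi0, nndist_pi_def, hj0, ← dist_nndist,
      Real.dist_eq]
  set ε : ℝ := ((k:ℝ)+1) * δ with hε_def
  have hε : 0 < ε := by positivity
  set c : Fin k → ℝ := fun i => x.2 i j0 - x'.2 i j0 with hc_def
  have hci0 : |c i0| = M := hMj.symm
  have hc0 : c i0 ≠ 0 := by
    intro h
    rw [← hci0, h, abs_zero] at hM
    exact lt_irrefl _ hM
  set α : ℝ := x.1 j0 - x'.1 j0 with hα_def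
  -- points in the thickening stay close to the graph over their own base point
  have hbound : ∀ y : (Fin (n-k) → ℝ) × (Fin k → Fin (n-k) → ℝ), admissibleCode n k y →
      ∀ p ∈ Metric.thickening δ (affGraph n k y), ∀ j,
        |p.2 j - (y.1 j + ∑ i, p.1 i * y.2 i j)| ≤ ε := by
    intro y hy p hp j
    obtain ⟨q, hq, hpq⟩ := Metric.mem_thickening_iff.1 hp
    obtain ⟨s, rfl⟩ := hq
    rw [Prod.dist_eq, max_lt_iff] at hpq
    obtain ⟨h1, h2⟩ := hpq
    have hb1 : ∀ i, |y.2 i j| ≤ 1 := by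
      intro i
      have ha := hy.1 j
      have hab := hy.2 i j
      have : y.2 i j = (y.1 j + y.2 i j) - y.1 j := by ring
      rw [this]
      calc |(y.1 j + y.2 i j) - y.1 j| ≤ |y.1 j + y.2 i j| + |y.1 j| := abs_sub _ _
        _ ≤ 1 := by linarith
    have hts : ∀ i, |s i - p.1 i| ≤ δ := by
      intro i
      have h := dist_le_pi_dist p.1 s i
      rw [Real.dist_eq] at h
      rw [abs_sub_comm]
      exact le_of_lt (lt_of_le_of_lt h h1)
    have h2j : |p.2 j - (y.1 j + ∑ i, s i * y.2 i j)| < δ := by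
      have h := dist_le_pi_dist p.2 (y.1 + ∑ i, s i • y.2 i) j
      rw [Real.dist_eq] at h
      have hco : (y.1 + ∑ i, s i • y.2 i) j = y.1 j + ∑ i, s i * y.2 i j := by
        simp [Finset.sum_apply]
      rw [hco] at h
      exact lt_of_le_of_lt h h2
    have hsum : ∑ i, s i * y.2 i j - ∑ i, p.1 i * y.2 i j
        = ∑ i, (s i - p.1 i) * y.2 i j := by
      rw [← Finset.sum_sub_distrib]
      exact Finset.sum_congr rfl fun i _ => by ring
    have hsumb : |∑ i, (s i - p.1 i) * y.2 i j| ≤ (k:ℝ) * δ := by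
      calc |∑ i, (s i - p.1 i) * y.2 i j| ≤ ∑ i, |(s i - p.1 i) * y.2 i j| :=
            Finset.abs_sum_le_sum_abs _ _
        _ ≤ ∑ _i : Fin k, δ := by
            refine Finset.sum_le_sum fun i _ => ?_
            rw [abs_mul]
            calc |s i - p.1 i| * |y.2 i j| ≤ δ * 1 :=
                  mul_le_mul (hts i) (hb1 i) (abs_nonneg _) (le_of_lt hδ)
              _ = δ := mul_one δ
        _ = (k:ℝ) * δ := by
            rw [Finset.sum_const, Finset.card_univ, Fintype.card_fin, nsmul_eq_mul]
    have : p.2 j - (y.1 j + ∑ i, p.1 i * y.2 i j)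
        = (p.2 j - (y.1 j + ∑ i, s i * y.2 i j)) + ∑ i, (s i - p.1 i) * y.2 i j := by
      rw [← hsum]; ring
    rw [this, hε_def]
    calc |_ + _| ≤ |p.2 j - (y.1 j + ∑ i, s i * y.2 i j)|
          + |∑ i, (s i - p.1 i) * y.2 i j| := abs_add_le _ _
      _ ≤ δ + (k:ℝ) * δ := add_le_add (le_of_lt h2j) hsumb
      _ = ((k:ℝ)+1) * δ := by ring
  -- the simplex is inside the unit cube
  have hhull : ∀ t ∈ convexHull ℝ
      (insert 0 (Set.range fun i : Fin k => (Pi.single i 1 : Fin k → ℝ))),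
      ∀ i, t i ∈ Set.Icc (0:ℝ) 1 := by
    intro t ht
    have hsub : convexHull ℝ
        (insert 0 (Set.range fun i : Fin k => (Pi.single i 1 : Fin k → ℝ)))
        ⊆ {t : Fin k → ℝ | ∀ i, t i ∈ Set.Icc (0:ℝ) 1} := by
      apply convexHull_min
      · rintro y hy
        rcases Set.mem_insert_iff.1 hy with rfl | ⟨i', rfl⟩
        · intro i; simp
        · intro i
          rcases eq_or_ne i i' with rfl | hii
          · simp
          · simp [Pi.single_apply, hii]
      · have h : {t : Fin k → ℝ | ∀ i, t i ∈ Set.Icc (0:ℝ) 1} =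
            Set.pi Set.univ (fun _ => Set.Icc (0:ℝ) 1) := by
          ext t
          simp only [Set.mem_setOf_eq, Set.mem_pi, Set.mem_univ, forall_true_left]
        rw [h]
        exact convex_pi fun _ _ => convex_Icc 0 1
    exact hsub ht
  set A : Set ((Fin k → ℝ) × (Fin (n-k) → ℝ)) :=
    {p | (∀ i, p.1 i ∈ Set.Icc (0:ℝ) 1) ∧ |α + ∑ i, p.1 i * c i| ≤ 2 * ε ∧
      ∀ j, |p.2 j - (x.1 j + ∑ i, p.1 i * x.2 i j)| ≤ ε} with hA_def
  set T : Set (Fin k → ℝ) :=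
    {t | (∀ i, t i ∈ Set.Icc (0:ℝ) 1) ∧ |α + ∑ i, t i * c i| ≤ 2 * ε} with hT_def
  -- the target set is contained in A
  have hsubA : Metric.thickening δ (affGraph n k x) ∩
      Metric.thickening δ (affGraph n k x') ∩ simplexCube n k ⊆ A := by
    intro p hp
    obtain ⟨⟨hp1, hp2⟩, hpS⟩ := hp
    have hS : p.1 ∈ convexHull ℝ
        (insert 0 (Set.range fun i : Fin k => (Pi.single i 1 : Fin k → ℝ))) := hpS.1
    refine ⟨fun i => hhull p.1 hS i, ?_, fun j => hbound x hx p hp1 j⟩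
    have h1 := hbound x hx p hp1 j0
    have h2 := hbound x' hx' p hp2 j0
    have hexp : α + ∑ i, p.1 i * c i =
        (x.1 j0 + ∑ i, p.1 i * x.2 i j0) - (x'.1 j0 + ∑ i, p.1 i * x'.2 i j0) := by
      rw [hα_def, hc_def]
      have : ∑ i, p.1 i * (x.2 i j0 - x'.2 i j0)
          = ∑ i, p.1 i * x.2 i j0 - ∑ i, p.1 i * x'.2 i j0 := by
        rw [← Finset.sum_sub_distrib]
        exact Finset.sum_congr rfl fun i _ => by ring
      rw [this]; ring
    rw [hexp]
    calc |(x.1 j0 + ∑ i, p.1 i * x.2 i j0) - (x'.1 j0 + ∑ i, p.1 i * x'.2 i j0)|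
        ≤ |(x.1 j0 + ∑ i, p.1 i * x.2 i j0) - p.2 j0|
          + |p.2 j0 - (x'.1 j0 + ∑ i, p.1 i * x'.2 i j0)| := abs_sub_le _ _ _
      _ ≤ ε + ε := by
          rw [abs_sub_comm]
          exact add_le_add h1 h2
      _ = 2 * ε := by ring
  -- measurability
  have hcont1 : Continuous fun p : (Fin k → ℝ) × (Fin (n-k) → ℝ) =>
      α + ∑ i, p.1 i * c i :=
    continuous_const.add (continuous_finset_sum _ fun i _ =>
      ((continuous_apply i).comp continuous_fst).mul continuous_const)
  have hcontg : ∀ j, Continuous fun p : (Fin k → ℝ) × (Fin (n-k) → ℝ) =>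
      p.2 j - (x.1 j + ∑ i, p.1 i * x.2 i j) := by
    intro j
    exact ((continuous_apply j).comp continuous_snd).sub
      (continuous_const.add (continuous_finset_sum _ fun i _ =>
        ((continuous_apply i).comp continuous_fst).mul continuous_const))
  have hA1closed : IsClosed {p : (Fin k → ℝ) × (Fin (n-k) → ℝ) | ∀ i, p.1 i ∈ Set.Icc (0:ℝ) 1} := by
    have h : {p : (Fin k → ℝ) × (Fin (n-k) → ℝ) | ∀ i, p.1 i ∈ Set.Icc (0:ℝ) 1}
        = ⋂ i, {p : (Fin k → ℝ) × (Fin (n-k) → ℝ) | p.1 i ∈ Set.Icc (0:ℝ) 1} := by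
      ext p
      simp only [Set.mem_setOf_eq, Set.mem_iInter]
    rw [h]
    exact isClosed_iInter fun i =>
      IsClosed.preimage ((continuous_apply i).comp continuous_fst) isClosed_Icc
  have hA3closed : IsClosed {p : (Fin k → ℝ) × (Fin (n-k) → ℝ) |
      ∀ j, |p.2 j - (x.1 j + ∑ i, p.1 i * x.2 i j)| ≤ ε} := by
    have h : {p : (Fin k → ℝ) × (Fin (n-k) → ℝ) |
        ∀ j, |p.2 j - (x.1 j + ∑ i, p.1 i * x.2 i j)| ≤ ε}
        = ⋂ j, {p : (Fin k → ℝ) × (Fin (n-k) → ℝ) |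
            |p.2 j - (x.1 j + ∑ i, p.1 i * x.2 i j)| ≤ ε} := by
      ext p
      simp only [Set.mem_setOf_eq, Set.mem_iInter]
    rw [h]
    exact isClosed_iInter fun j =>
      isClosed_le (continuous_abs.comp (hcontg j)) continuous_const
  have hA2closed : IsClosed {p : (Fin k → ℝ) × (Fin (n-k) → ℝ) |
      |α + ∑ i, p.1 i * c i| ≤ 2 * ε} :=
    isClosed_le (continuous_abs.comp hcont1) continuous_const
  have hAclosed : IsClosed A := hA1closed.inter (hA2closed.inter hA3closed)
  have hAmeas : MeasurableSet A := hAclosed.measurableSet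
  have hTcont : Continuous fun t : Fin k → ℝ => α + ∑ i, t i * c i :=
    continuous_const.add (continuous_finset_sum _ fun i _ =>
      (continuous_apply i).mul continuous_const)
  have hTmeas : MeasurableSet T := by
    have h1 : IsClosed {t : Fin k → ℝ | ∀ i, t i ∈ Set.Icc (0:ℝ) 1} := by
      have h : {t : Fin k → ℝ | ∀ i, t i ∈ Set.Icc (0:ℝ) 1}
          = Set.pi Set.univ (fun _ => Set.Icc (0:ℝ) 1) := by
        ext t
        simp only [Set.mem_setOf_eq, Set.mem_pi, Set.mem_univ, forall_true_left]
      rw [h]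
      exact isClosed_set_pi fun i _ => isClosed_Icc
    exact (h1.inter (isClosed_le (continuous_abs.comp hTcont) continuous_const)).measurableSet
  -- Fubini on the product
  have hvolA : volume A ≤ ENNReal.ofReal (2 * ε) ^ (n - k) * volume T := by
    rw [Measure.volume_eq_prod, Measure.prod_apply hAmeas]
    have hslice : ∀ t : Fin k → ℝ, volume (Prod.mk t ⁻¹' A) ≤
        T.indicator (fun _ => ENNReal.ofReal (2 * ε) ^ (n - k)) t := by
      intro t
      by_cases ht : t ∈ T
      · rw [Set.indicator_of_mem ht]
        have hsub : Prod.mk t ⁻¹' A ⊆ Set.pi Set.univ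
            (fun j => Set.Icc ((x.1 j + ∑ i, t i * x.2 i j) - ε)
              ((x.1 j + ∑ i, t i * x.2 i j) + ε)) := by
          intro y hy
          intro j _
          have := hy.2.2 j
          rw [abs_le] at this
          constructor <;> [linarith [this.1]; linarith [this.2]]
        refine (measure_mono hsub).trans ?_
        rw [volume_pi_pi]
        have : ∀ j : Fin (n-k), volume (Set.Icc ((x.1 j + ∑ i, t i * x.2 i j) - ε)
            ((x.1 j + ∑ i, t i * x.2 i j) + ε)) = ENNReal.ofReal (2 * ε) := by
          intro j
          rw [Real.volume_Icc]
          congr 1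
          ring
        rw [Finset.prod_congr rfl fun j _ => this j, Finset.prod_const,
          Finset.card_univ, Fintype.card_fin]
      · have : Prod.mk t ⁻¹' A = ∅ := by
          ext y
          simp only [Set.mem_preimage, Set.mem_empty_iff_false, iff_false]
          intro hy
          exact ht ⟨hy.1, hy.2.1⟩
        rw [this, measure_empty, Set.indicator_of_notMem ht]
    calc ∫⁻ t, volume (Prod.mk t ⁻¹' A) ≤
        ∫⁻ t, T.indicator (fun _ => ENNReal.ofReal (2 * ε) ^ (n - k)) t :=
          lintegral_mono hslice
      _ = ENNReal.ofReal (2 * ε) ^ (n - k) * volume T := lintegral_indicator_const hTmeas _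
  have hvolT : volume T ≤ ENNReal.ofReal (4 * ε / M) := by
    have := cube_slab_volume_le c α i0 hc0 (2 * ε)
    rw [hci0] at this
    refine (le_of_eq ?_).trans (this.trans (le_of_eq ?_))
    · rfl
    · congr 1
      ring
  calc volume (Metric.thickening δ (affGraph n k x) ∩
        Metric.thickening δ (affGraph n k x') ∩ simplexCube n k)
      ≤ volume A := measure_mono hsubA
    _ ≤ ENNReal.ofReal (2 * ε) ^ (n - k) * volume T := hvolA
    _ ≤ ENNReal.ofReal (2 * ε) ^ (n - k) * ENNReal.ofReal (4 * ε / M) := by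
        exact mul_le_mul_right hvolT _
    _ = ENNReal.ofReal ((2 * ε) ^ (n - k) * (4 * ε / M)) := by
        rw [← ENNReal.ofReal_pow (by positivity), ← ENNReal.ofReal_mul (by positivity)]
    _ = ENNReal.ofReal ((2 * ((k:ℝ)+1))^(n-k) * (4 * ((k:ℝ)+1)) * δ ^ (n - k + 1) / M) := by
        congr 1
        rw [hε_def, show (2:ℝ) * (((k:ℝ)+1) * δ) = (2 * ((k:ℝ)+1)) * δ from by ring,
          mul_pow, pow_succ]
        field_simp
    _ = ENNReal.ofReal ((2 * ((k:ℝ)+1))^(n-k) * (4 * ((k:ℝ)+1)) * δ ^ (n - k + 1) / dist x.2 x'.2) := by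
        rw [hM_def]
end

section
/- Let 1 ≤ k < n be integers, 0 < s ≤ 1 and C₀ > 0. Let μ be a Borel probability measure on ℝ^{(k+1)(n−k)} whose support is contained in the set of admissible codes, and suppose μ satisfies the Frostman condition μ(B(x,r)) ≤ C₀ · r^s for every x and every r > 0 (balls in the sup metric). Then there is a constant C = C(n,k,C₀) > 0 such that for every 0 < δ ≤ 1/2, the double integral ∬ L^n(P(x)_δ ∩ P(y)_δ ∩ S) dμ(x) dμ(y) ≤ C · δ^{n−k+s} · log(1/δ). -/
open scoped ENNReal
open MeasureTheory

lemma interval_volume (a b R : ℝ) (hR : 0 ≤ R) (ha : a ≠ 0) :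
    volume {x : ℝ | |b + a * x| ≤ R} ≤ ENNReal.ofReal (2 * R / |a|) := by
  have hset : {x : ℝ | |b + a * x| ≤ R} = (a * ·) ⁻¹' (Set.Icc (-R - b) (R - b)) := by
    ext x
    simp only [Set.mem_setOf_eq, Set.mem_preimage, Set.mem_Icc, abs_le]
    constructor <;> intro h <;> constructor <;> linarith [h.1, h.2]
  rw [hset, Real.volume_preimage_mul_left ha, Real.volume_Icc]
  rw [← ENNReal.ofReal_mul (by positivity)]
  apply ENNReal.ofReal_le_ofReal
  rw [div_eq_mul_inv, mul_comm, abs_inv]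
  gcongr
  linarith

lemma slab_volume {k' : ℕ} (c : ℝ) (w : Fin (k' + 1) → ℝ) (i0 : Fin (k' + 1)) (R : ℝ)
    (hR : 0 ≤ R) (hw : w i0 ≠ 0) :
    volume {t : Fin (k' + 1) → ℝ | t ∈ Set.Icc 0 1 ∧ |c + ∑ i, w i * t i| ≤ R} ≤
      ENNReal.ofReal (2 * R / |w i0|) := by
  set e := MeasurableEquiv.piFinSuccAbove (fun _ : Fin (k' + 1) => ℝ) i0 with he
  have hpres : MeasurePreserving e volume volume :=
    volume_preserving_piFinSuccAbove (fun _ : Fin (k' + 1) => ℝ) i0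
  set S' : Set (ℝ × (Fin k' → ℝ)) :=
    {q | (∀ j, q.2 j ∈ Set.Icc (0:ℝ) 1) ∧
      |c + w i0 * q.1 + ∑ j, w (i0.succAbove j) * q.2 j| ≤ R} with hS'def
  have hS'meas : MeasurableSet S' := by
    have h1 : MeasurableSet {q : ℝ × (Fin k' → ℝ) | ∀ j, q.2 j ∈ Set.Icc (0:ℝ) 1} := by
      rw [Set.setOf_forall]
      exact MeasurableSet.iInter fun j =>
        ((measurable_pi_apply j).comp measurable_snd) measurableSet_Icc
    have hcont : Continuous fun q : ℝ × (Fin k' → ℝ) =>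
        c + w i0 * q.1 + ∑ j, w (i0.succAbove j) * q.2 j := by fun_prop
    have h2eq : {q : ℝ × (Fin k' → ℝ) |
        |c + w i0 * q.1 + ∑ j, w (i0.succAbove j) * q.2 j| ≤ R} =
        (fun q : ℝ × (Fin k' → ℝ) =>
          c + w i0 * q.1 + ∑ j, w (i0.succAbove j) * q.2 j) ⁻¹' (Set.Icc (-R) R) := by
      ext q; simp [abs_le, Set.mem_Icc]
    have h2 : MeasurableSet {q : ℝ × (Fin k' → ℝ) |
        |c + w i0 * q.1 + ∑ j, w (i0.succAbove j) * q.2 j| ≤ R} := by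
      rw [h2eq]; exact hcont.measurable measurableSet_Icc
    exact h1.inter h2
  have hsub : {t : Fin (k' + 1) → ℝ | t ∈ Set.Icc 0 1 ∧ |c + ∑ i, w i * t i| ≤ R} ⊆
      e ⁻¹' S' := by
    intro t ⟨ht01, htR⟩
    have het : e t = (t i0, fun j => t (i0.succAbove j)) := rfl
    rw [Set.mem_preimage, het]
    constructor
    · intro j
      exact ⟨ht01.1 (i0.succAbove j), ht01.2 (i0.succAbove j)⟩
    · have := Fin.sum_univ_succAbove (fun i => w i * t i) i0
      rw [this] at htR
      simpa [add_assoc] using htR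
  calc volume {t : Fin (k' + 1) → ℝ | t ∈ Set.Icc 0 1 ∧ |c + ∑ i, w i * t i| ≤ R}
      ≤ volume (e ⁻¹' S') := measure_mono hsub
    _ = volume S' := hpres.measure_preimage hS'meas.nullMeasurableSet
    _ ≤ ENNReal.ofReal (2 * R / |w i0|) := by
        rw [MeasureTheory.Measure.volume_eq_prod, Measure.prod_apply_symm hS'meas]
        have hslice : ∀ y : Fin k' → ℝ,
            volume ((fun x => (x, y)) ⁻¹' S') ≤
              (Set.Icc (0:Fin k' → ℝ) 1).indicator
                (fun _ => ENNReal.ofReal (2 * R / |w i0|)) y := by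
          intro y
          by_cases hy : ∀ j, y j ∈ Set.Icc (0:ℝ) 1
          · have : (fun x => (x, y)) ⁻¹' S' ⊆
                {x : ℝ | |(c + ∑ j, w (i0.succAbove j) * y j) + w i0 * x| ≤ R} := by
              intro x hx
              have := hx.2
              simp only [Set.mem_setOf_eq]
              convert this using 2
              ring
            refine le_trans (measure_mono this)
              (le_trans (interval_volume _ _ _ hR hw) ?_)
            rw [Set.indicator_of_mem]
            · exact ⟨fun j => (hy j).1, fun j => (hy j).2⟩
          · have : (fun x => (x, y)) ⁻¹' S' = ∅ := by
              ext x; simp only [Set.mem_preimage, hS'def, Set.mem_setOf_eq,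
                Set.mem_empty_iff_false, iff_false]
              intro h; exact hy h.1
            rw [this]
            simp
        calc ∫⁻ y, volume ((fun x => (x, y)) ⁻¹' S') ≤
            ∫⁻ y, (Set.Icc (0:Fin k' → ℝ) 1).indicator
              (fun _ => ENNReal.ofReal (2 * R / |w i0|)) y := lintegral_mono hslice
          _ = ENNReal.ofReal (2 * R / |w i0|) * volume (Set.Icc (0:Fin k' → ℝ) 1) := by
              rw [lintegral_indicator_const measurableSet_Icc]
          _ ≤ ENNReal.ofReal (2 * R / |w i0|) := by
              rw [Real.volume_Icc_pi]
              simp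

lemma affine_sublevel_volume {k : ℕ} (hk : 1 ≤ k) (c : ℝ) (w : Fin k → ℝ) (R M : ℝ)
    (hR : 0 ≤ R) (hM : 0 < M) (hvert : M ≤ |c| ∨ ∃ i, M ≤ |c + w i|) :
    volume {t : Fin k → ℝ | t ∈ Set.Icc 0 1 ∧ |c + ∑ i, w i * t i| ≤ R} ≤
      ENNReal.ofReal (4 * (k + 1) * R / M) := by
  obtain ⟨k', rfl⟩ : ∃ k', k = k' + 1 := ⟨k - 1, (Nat.succ_pred_eq_of_pos hk).symm⟩
  have hkcast : ((k' + 1 : ℕ) : ℝ) = (k' : ℝ) + 1 := by push_cast; ring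
  set K : ℝ := (k' : ℝ) + 1 with hK
  have hKpos : 0 < K := by positivity
  obtain ⟨i0, -, hi0⟩ := Finset.exists_max_image Finset.univ (fun i => |w i|)
    Finset.univ_nonempty
  set m0 := |w i0| with hm0
  have hm0nn : 0 ≤ m0 := abs_nonneg _
  by_cases hbig : M / (2 * (K + 1)) ≤ m0
  · have hm0pos : 0 < m0 := lt_of_lt_of_le (by positivity) hbig
    have hwne : w i0 ≠ 0 := by
      intro h; rw [hm0, h, abs_zero] at hm0pos; exact lt_irrefl 0 hm0pos
    refine le_trans (slab_volume c w i0 R hR hwne) (ENNReal.ofReal_le_ofReal ?_)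
    rw [div_le_div_iff₀ hm0pos hM]
    rw [div_le_iff₀ (by positivity)] at hbig
    rw [hkcast]
    nlinarith [hR, hM.le, hm0pos.le, hKpos.le]
  · push_neg at hbig
    have hc : M - m0 ≤ |c| := by
      rcases hvert with h | ⟨i, h⟩
      · linarith
      · have h1 : |c + w i| - |w i| ≤ |c| := by
          have := abs_sub_abs_le_abs_sub (c + w i) (w i)
          simpa using this
        have h2 : |w i| ≤ m0 := hi0 i (Finset.mem_univ i)
        linarith
    rcases le_or_gt (M / 2) R with hRM | hRM
    · calc volume {t : Fin (k' + 1) → ℝ | t ∈ Set.Icc 0 1 ∧ |c + ∑ i, w i * t i| ≤ R}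
          ≤ volume (Set.Icc (0 : Fin (k' + 1) → ℝ) 1) := measure_mono (fun t ht => ht.1)
        _ = 1 := by rw [Real.volume_Icc_pi]; simp
        _ ≤ ENNReal.ofReal (4 * ((k' + 1 : ℕ) + 1) * R / M) := by
            rw [← ENNReal.ofReal_one]
            apply ENNReal.ofReal_le_ofReal
            rw [le_div_iff₀ hM]
            nlinarith [hKpos.le]
    · have hempty : {t : Fin (k' + 1) → ℝ | t ∈ Set.Icc 0 1 ∧ |c + ∑ i, w i * t i| ≤ R} = ∅ := by
        ext t
        simp only [Set.mem_setOf_eq, Set.mem_empty_iff_false, iff_false, not_and]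
        intro ht01 habs
        have hsum : |∑ i, w i * t i| ≤ K * m0 := by
          calc |∑ i, w i * t i| ≤ ∑ i, |w i * t i| := Finset.abs_sum_le_sum_abs _ _
            _ ≤ ∑ _i : Fin (k' + 1), m0 := by
                apply Finset.sum_le_sum
                intro i _
                rw [abs_mul]
                have h1 : |w i| ≤ m0 := hi0 i (Finset.mem_univ i)
                have h2 : |t i| ≤ 1 := by
                  have hlo : (0 : Fin (k' + 1) → ℝ) ≤ t := ht01.1
                  have hhi : t ≤ 1 := ht01.2
                  rw [abs_le]
                  constructor
                  · have := hlo i; simp only [Pi.zero_apply] at this; linarith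
                  · have := hhi i; simp only [Pi.one_apply] at this; linarith
                nlinarith [abs_nonneg (w i), abs_nonneg (t i)]
            _ = K * m0 := by
                rw [Finset.sum_const, Finset.card_univ, Fintype.card_fin, nsmul_eq_mul, hkcast]
          -- done
        have hlow : M / 2 < |c + ∑ i, w i * t i| := by
          have h3 : |c| - |∑ i, w i * t i| ≤ |c + ∑ i, w i * t i| := by
            have := abs_sub_abs_le_abs_sub c (-(∑ i, w i * t i))
            simp only [sub_neg_eq_add, abs_neg] at this
            linarith
          have hb : (K + 1) * m0 < M / 2 := by
            rw [lt_div_iff₀ (by positivity)] at hbig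
            nlinarith [hm0nn, hKpos.le]
          nlinarith
        linarith
      rw [hempty]
      simp

lemma shear_volume {k m : ℕ} (F : (Fin k → ℝ) → (Fin m → ℝ)) (hF : Continuous F)
    (T : Set (Fin k → ℝ)) (hT : MeasurableSet T) (R : ℝ) :
    volume {p : (Fin k → ℝ) × (Fin m → ℝ) | p.1 ∈ T ∧ ∀ j, |p.2 j - F p.1 j| ≤ R}
      = ENNReal.ofReal (2 * R) ^ m * volume T := by
  have hIcc : ∀ v : Fin m → ℝ, {u : Fin m → ℝ | ∀ j, |u j - v j| ≤ R} =
      (fun u => u + (-v)) ⁻¹' Set.Icc (fun _ => -R) (fun _ => R) := by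
    intro v
    ext u
    simp only [Set.mem_setOf_eq, Set.mem_preimage, Set.mem_Icc, Pi.le_def, Pi.add_apply,
      Pi.neg_apply, abs_le]
    constructor
    · intro h; exact ⟨fun j => by linarith [(h j).1], fun j => by linarith [(h j).2]⟩
    · intro h j; exact ⟨by linarith [h.1 j], by linarith [h.2 j]⟩
  have hIccVol : volume (Set.Icc (fun _ => -R) (fun _ => R) : Set (Fin m → ℝ)) =
      ENNReal.ofReal (2 * R) ^ m := by
    rw [Real.volume_Icc_pi]
    norm_num [two_mul]
  have hE : MeasurableSet {p : (Fin k → ℝ) × (Fin m → ℝ) | p.1 ∈ T ∧ ∀ j, |p.2 j - F p.1 j| ≤ R} := by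
    have h1 : MeasurableSet {p : (Fin k → ℝ) × (Fin m → ℝ) | p.1 ∈ T} :=
      measurable_fst hT
    have h2eq : {p : (Fin k → ℝ) × (Fin m → ℝ) | ∀ j, |p.2 j - F p.1 j| ≤ R} =
        (fun p : (Fin k → ℝ) × (Fin m → ℝ) => p.2 + (-F p.1)) ⁻¹'
          Set.Icc (fun _ => -R) (fun _ => R) := by
      ext p
      have := hIcc (F p.1)
      rw [Set.ext_iff] at this
      exact this p.2
    have h2 : MeasurableSet {p : (Fin k → ℝ) × (Fin m → ℝ) | ∀ j, |p.2 j - F p.1 j| ≤ R} := by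
      rw [h2eq]
      exact ((continuous_snd.add (hF.comp continuous_fst).neg)).measurable measurableSet_Icc
    exact h1.inter h2
  rw [MeasureTheory.Measure.volume_eq_prod, Measure.prod_apply hE]
  have hslice : ∀ t : Fin k → ℝ,
      volume (Prod.mk t ⁻¹' {p : (Fin k → ℝ) × (Fin m → ℝ) | p.1 ∈ T ∧ ∀ j, |p.2 j - F p.1 j| ≤ R})
        = T.indicator (fun _ => ENNReal.ofReal (2 * R) ^ m) t := by
    intro t
    by_cases ht : t ∈ T
    · have : Prod.mk t ⁻¹' {p : (Fin k → ℝ) × (Fin m → ℝ) | p.1 ∈ T ∧ ∀ j, |p.2 j - F p.1 j| ≤ R}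
          = (fun u => u + (-F t)) ⁻¹' Set.Icc (fun _ => -R) (fun _ => R) := by
        rw [← hIcc]
        ext u
        simp [ht]
      rw [this, measure_preimage_add_right, hIccVol, Set.indicator_of_mem ht]
    · have : Prod.mk t ⁻¹' {p : (Fin k → ℝ) × (Fin m → ℝ) | p.1 ∈ T ∧ ∀ j, |p.2 j - F p.1 j| ≤ R}
          = ∅ := by
        ext u; simp [ht]
      rw [this, Set.indicator_of_notMem ht]
      simp
  simp_rw [hslice]
  rw [lintegral_indicator_const hT]

lemma thickening_coord {n k : ℕ} (x : (Fin (n - k) → ℝ) × (Fin k → Fin (n - k) → ℝ))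
    (hx : admissibleCode n k x) {δ : ℝ}
    (p : (Fin k → ℝ) × (Fin (n - k) → ℝ))
    (hp : p ∈ Metric.thickening δ (affGraph n k x)) (j : Fin (n - k)) :
    |p.2 j - (x.1 j + ∑ i, p.1 i * x.2 i j)| ≤ (k + 1) * δ := by
  rw [Metric.mem_thickening_iff] at hp
  obtain ⟨z, ⟨t, rfl⟩, hdist⟩ := hp
  rw [Prod.dist_eq] at hdist
  have hd1 : dist p.1 t < δ := lt_of_le_of_lt (le_max_left _ _) hdist
  have hd2 : dist p.2 (x.1 + ∑ i, t i • x.2 i) < δ := lt_of_le_of_lt (le_max_right _ _) hdist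
  have hz2j : (x.1 + ∑ i, t i • x.2 i) j = x.1 j + ∑ i, t i * x.2 i j := by
    simp [Finset.sum_apply]
  have h2j : |p.2 j - (x.1 j + ∑ i, t i * x.2 i j)| ≤ dist p.2 (x.1 + ∑ i, t i • x.2 i) := by
    rw [← hz2j, ← Real.dist_eq]
    exact dist_le_pi_dist _ _ j
  have hb : ∀ i, |x.2 i j| ≤ 1 := by
    intro i
    have h1 := hx.1 j
    have h2 := hx.2 i j
    have : x.2 i j = (x.1 j + x.2 i j) - x.1 j := by ring
    rw [this]
    calc |(x.1 j + x.2 i j) - x.1 j| ≤ |x.1 j + x.2 i j| + |x.1 j| := abs_sub _ _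
      _ ≤ 1 := by linarith
  have hsum : |∑ i, t i * x.2 i j - ∑ i, p.1 i * x.2 i j| ≤ k * δ := by
    rw [← Finset.sum_sub_distrib]
    calc |∑ i, (t i * x.2 i j - p.1 i * x.2 i j)|
        ≤ ∑ i, |t i * x.2 i j - p.1 i * x.2 i j| := Finset.abs_sum_le_sum_abs _ _
      _ ≤ ∑ _i : Fin k, δ := by
          apply Finset.sum_le_sum
          intro i _
          have : t i * x.2 i j - p.1 i * x.2 i j = (t i - p.1 i) * x.2 i j := by ring
          rw [this, abs_mul]
          have h1 : |t i - p.1 i| ≤ dist p.1 t := by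
            rw [← Real.dist_eq, dist_comm (t i)]
            exact dist_le_pi_dist _ _ i
          have h2 := hb i
          nlinarith [abs_nonneg (t i - p.1 i), abs_nonneg (x.2 i j), hd1]
      _ = k * δ := by
          rw [Finset.sum_const, Finset.card_univ, Fintype.card_fin, nsmul_eq_mul]
  calc |p.2 j - (x.1 j + ∑ i, p.1 i * x.2 i j)|
      ≤ |p.2 j - (x.1 j + ∑ i, t i * x.2 i j)| + |∑ i, t i * x.2 i j - ∑ i, p.1 i * x.2 i j| := by
        have : p.2 j - (x.1 j + ∑ i, p.1 i * x.2 i j) =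
            (p.2 j - (x.1 j + ∑ i, t i * x.2 i j)) +
            (∑ i, t i * x.2 i j - ∑ i, p.1 i * x.2 i j) := by ring
        rw [this]
        exact abs_add_le _ _
    _ ≤ (k + 1) * δ := by
        have := h2j.trans hd2.le
        nlinarith [Nat.cast_nonneg (α := ℝ) k, hd1]

lemma simplex_sub_Icc (k : ℕ) :
    convexHull ℝ (insert 0 (Set.range fun i : Fin k => (Pi.single i 1 : Fin k → ℝ))) ⊆
      Set.Icc (0 : Fin k → ℝ) 1 := by
  apply convexHull_min _ (convex_Icc _ _)
  rintro t (rfl | ⟨i, rfl⟩)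
  · exact ⟨le_refl _, fun j => by norm_num⟩
  · constructor
    · intro j
      by_cases h : j = i <;> simp [Pi.single_apply, h]
    · intro j
      by_cases h : j = i <;> simp [Pi.single_apply, h]

lemma exists_coord {n k : ℕ} (x y : (Fin (n - k) → ℝ) × (Fin k → Fin (n - k) → ℝ))
    (hd : 0 < dist x y) :
    ∃ j, dist x y / 2 ≤ |x.1 j - y.1 j| ∨
      ∃ i, dist x y / 2 ≤ |(x.1 j + x.2 i j) - (y.1 j + y.2 i j)| := by
  set d := dist x y with hdd
  have hmax : d = max (dist x.1 y.1) (dist x.2 y.2) := Prod.dist_eq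
  rcases le_total (dist x.2 y.2) (dist x.1 y.1) with h | h
  · have hd1 : d = dist x.1 y.1 := by rw [hmax, max_eq_left h]
    have hpos : 0 < dist x.1 y.1 := hd1 ▸ hd
    have hex : ∃ j, d ≤ dist (x.1 j) (y.1 j) := by
      by_contra hc
      push_neg at hc
      have := (dist_pi_lt_iff (hd1 ▸ hd)).mpr hc
      rw [← hd1] at this
      exact lt_irrefl d (hd1 ▸ this)
    obtain ⟨j, hj⟩ := hex
    refine ⟨j, Or.inl ?_⟩
    rw [Real.dist_eq] at hj
    linarith
  · have hd2 : d = dist x.2 y.2 := by rw [hmax, max_eq_right h]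
    have hex : ∃ i, d ≤ dist (x.2 i) (y.2 i) := by
      by_contra hc
      push_neg at hc
      have := (dist_pi_lt_iff (hd2 ▸ hd)).mpr hc
      exact lt_irrefl d (hd2 ▸ this)
    obtain ⟨i, hi⟩ := hex
    have hex2 : ∃ j, d ≤ dist (x.2 i j) (y.2 i j) := by
      by_contra hc
      push_neg at hc
      have h0 : 0 < d := hd
      have := (dist_pi_lt_iff h0).mpr hc
      exact absurd this (not_lt.mpr hi)
    obtain ⟨j, hj⟩ := hex2
    rw [Real.dist_eq] at hj
    refine ⟨j, ?_⟩
    rcases le_or_gt (d / 2) |x.1 j - y.1 j| with hc | hc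
    · exact Or.inl hc
    · refine Or.inr ⟨i, ?_⟩
      have hkey : |x.2 i j - y.2 i j| ≤
          |(x.1 j + x.2 i j) - (y.1 j + y.2 i j)| + |x.1 j - y.1 j| := by
        have h1 : x.2 i j - y.2 i j =
            ((x.1 j + x.2 i j) - (y.1 j + y.2 i j)) + (-(x.1 j - y.1 j)) := by ring
        rw [h1]
        calc |((x.1 j + x.2 i j) - (y.1 j + y.2 i j)) + (-(x.1 j - y.1 j))|
            ≤ |(x.1 j + x.2 i j) - (y.1 j + y.2 i j)| + |(-(x.1 j - y.1 j))| := abs_add_le _ _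
          _ = _ := by rw [abs_neg]
      linarith

lemma volB {n k : ℕ} (hk : 1 ≤ k) (x y : (Fin (n - k) → ℝ) × (Fin k → Fin (n - k) → ℝ))
    (hx : admissibleCode n k x) (hy : admissibleCode n k y) {δ : ℝ} (hδ : 0 < δ) :
    volume (Metric.thickening δ (affGraph n k x) ∩ Metric.thickening δ (affGraph n k y) ∩
        simplexCube n k)
      ≤ ENNReal.ofReal (2 * ((k + 1) * δ)) ^ (n - k) *
          min 1 (ENNReal.ofReal (16 * (k + 1) ^ 2 * δ) / edist x y) := by
  set R : ℝ := (k + 1) * δ with hR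
  have hRpos : 0 < R := by positivity
  set Fx : (Fin k → ℝ) → (Fin (n - k) → ℝ) := fun t j => x.1 j + ∑ i, t i * x.2 i j with hFx
  have hFxc : Continuous Fx := by
    apply continuous_pi
    intro j
    fun_prop
  rcases le_total (ENNReal.ofReal (16 * (k + 1) ^ 2 * δ) / edist x y) 1 with hm | hm
  · rw [min_eq_right hm]
    -- d > 0
    have hdpos : 0 < dist x y := by
      rcases eq_or_ne (edist x y) 0 with he | he
      · exfalso
        rw [he, ENNReal.div_zero (ENNReal.ofReal_pos.mpr (by positivity : (0:ℝ) < 16 * (k + 1) ^ 2 * δ)).ne'] at hm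
        · exact absurd hm (by simp)
      · exact dist_pos.mpr (fun hxy => he (by rw [hxy, edist_self]))
    set d := dist x y with hdd
    obtain ⟨j0, hj0⟩ := exists_coord x y hdpos
    set gc : ℝ := x.1 j0 - y.1 j0 with hgc
    set gm : Fin k → ℝ := fun i => x.2 i j0 - y.2 i j0 with hgm
    set T : Set (Fin k → ℝ) := {t | t ∈ Set.Icc 0 1 ∧ |gc + ∑ i, gm i * t i| ≤ 2 * R} with hT
    have hTmeas : MeasurableSet T := by
      have h1 : MeasurableSet (Set.Icc (0 : Fin k → ℝ) 1) := measurableSet_Icc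
      have hcont : Continuous fun t : Fin k → ℝ => gc + ∑ i, gm i * t i := by fun_prop
      have h2eq : {t : Fin k → ℝ | |gc + ∑ i, gm i * t i| ≤ 2 * R} =
          (fun t : Fin k → ℝ => gc + ∑ i, gm i * t i) ⁻¹' Set.Icc (-(2 * R)) (2 * R) := by
        ext t; simp [abs_le, Set.mem_Icc]
      have h2 : MeasurableSet {t : Fin k → ℝ | |gc + ∑ i, gm i * t i| ≤ 2 * R} := by
        rw [h2eq]; exact hcont.measurable measurableSet_Icc
      exact h1.inter h2
    have hsub : Metric.thickening δ (affGraph n k x) ∩ Metric.thickening δ (affGraph n k y) ∩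
        simplexCube n k ⊆
        {p : (Fin k → ℝ) × (Fin (n - k) → ℝ) | p.1 ∈ T ∧ ∀ j, |p.2 j - Fx p.1 j| ≤ R} := by
      rintro p ⟨⟨hpx, hpy⟩, hpS⟩
      have hcx : ∀ j, |p.2 j - Fx p.1 j| ≤ R := fun j => thickening_coord x hx p hpx j
      refine ⟨⟨simplex_sub_Icc k hpS.1, ?_⟩, hcx⟩
      have hcy := thickening_coord y hy p hpy j0
      have hcx0 := hcx j0
      have hsum : gc + ∑ i, gm i * p.1 i =
          (x.1 j0 + ∑ i, p.1 i * x.2 i j0) - (y.1 j0 + ∑ i, p.1 i * y.2 i j0) := by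
        rw [hgc]
        have : ∑ i, gm i * p.1 i = ∑ i, p.1 i * x.2 i j0 - ∑ i, p.1 i * y.2 i j0 := by
          rw [← Finset.sum_sub_distrib]
          apply Finset.sum_congr rfl
          intro i _
          rw [hgm]
          ring
        rw [this]
        ring
      rw [hsum]
      have habs : |(x.1 j0 + ∑ i, p.1 i * x.2 i j0) - (y.1 j0 + ∑ i, p.1 i * y.2 i j0)| ≤
          |p.2 j0 - (x.1 j0 + ∑ i, p.1 i * x.2 i j0)| +
          |p.2 j0 - (y.1 j0 + ∑ i, p.1 i * y.2 i j0)| := by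
        have h1 : (x.1 j0 + ∑ i, p.1 i * x.2 i j0) - (y.1 j0 + ∑ i, p.1 i * y.2 i j0) =
            (-(p.2 j0 - (x.1 j0 + ∑ i, p.1 i * x.2 i j0))) +
            (p.2 j0 - (y.1 j0 + ∑ i, p.1 i * y.2 i j0)) := by ring
        rw [h1]
        calc _ ≤ |(-(p.2 j0 - (x.1 j0 + ∑ i, p.1 i * x.2 i j0)))| +
            |p.2 j0 - (y.1 j0 + ∑ i, p.1 i * y.2 i j0)| := abs_add_le _ _
          _ = _ := by rw [abs_neg]
      have hcx0' : |p.2 j0 - (x.1 j0 + ∑ i, p.1 i * x.2 i j0)| ≤ R := hcx0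
      linarith
    have hvolT : volume T ≤ ENNReal.ofReal (4 * (k + 1) * (2 * R) / (d / 2)) := by
      apply affine_sublevel_volume hk gc gm (2 * R) (d / 2) (by positivity) (by positivity)
      rcases hj0 with h | ⟨i, h⟩
      · exact Or.inl h
      · refine Or.inr ⟨i, ?_⟩
        have : gc + gm i = (x.1 j0 + x.2 i j0) - (y.1 j0 + y.2 i j0) := by
          rw [hgc, hgm]; ring
        rw [this]
        exact h
    calc volume (Metric.thickening δ (affGraph n k x) ∩ Metric.thickening δ (affGraph n k y) ∩
          simplexCube n k)
        ≤ volume {p : (Fin k → ℝ) × (Fin (n - k) → ℝ) | p.1 ∈ T ∧ ∀ j, |p.2 j - Fx p.1 j| ≤ R} :=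
          measure_mono hsub
      _ = ENNReal.ofReal (2 * R) ^ (n - k) * volume T := shear_volume Fx hFxc T hTmeas R
      _ ≤ ENNReal.ofReal (2 * R) ^ (n - k) * ENNReal.ofReal (4 * (k + 1) * (2 * R) / (d / 2)) :=
          mul_le_mul_right hvolT _
      _ = ENNReal.ofReal (2 * ((k + 1) * δ)) ^ (n - k) *
          (ENNReal.ofReal (16 * (k + 1) ^ 2 * δ) / edist x y) := by
          congr 1
          rw [edist_dist, ← ENNReal.ofReal_div_of_pos hdpos]
          congr 1
          rw [hR]
          field_simp
          ring
  · rw [min_eq_left hm, mul_one]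
    have hsub : Metric.thickening δ (affGraph n k x) ∩ Metric.thickening δ (affGraph n k y) ∩
        simplexCube n k ⊆
        {p : (Fin k → ℝ) × (Fin (n - k) → ℝ) | p.1 ∈ Set.Icc 0 1 ∧ ∀ j, |p.2 j - Fx p.1 j| ≤ R} := by
      rintro p ⟨⟨hpx, _⟩, hpS⟩
      exact ⟨simplex_sub_Icc k hpS.1, fun j => thickening_coord x hx p hpx j⟩
    calc volume (Metric.thickening δ (affGraph n k x) ∩ Metric.thickening δ (affGraph n k y) ∩
          simplexCube n k)
        ≤ volume {p : (Fin k → ℝ) × (Fin (n - k) → ℝ) |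
            p.1 ∈ Set.Icc 0 1 ∧ ∀ j, |p.2 j - Fx p.1 j| ≤ R} := measure_mono hsub
      _ = ENNReal.ofReal (2 * R) ^ (n - k) * volume (Set.Icc (0 : Fin k → ℝ) 1) :=
          shear_volume Fx hFxc _ measurableSet_Icc R
      _ ≤ ENNReal.ofReal (2 * ((k + 1) * δ)) ^ (n - k) := by
          rw [Real.volume_Icc_pi]
          simp [hR]

lemma lintegral_min_bound {α : Type*} [PseudoMetricSpace α] [MeasurableSpace α]
    [OpensMeasurableSpace α]
    (μ : Measure α) [IsProbabilityMeasure μ] (C₀ s : ℝ) (hC₀ : 0 < C₀) (hs0 : 0 < s)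
    (hs1 : s ≤ 1)
    (hfrost : ∀ x r, 0 < r → μ (Metric.ball x r) ≤ ENNReal.ofReal (C₀ * r ^ s))
    (x : α) (Bc δ : ℝ) (hB : 1 ≤ Bc) (hδ0 : 0 < δ) (hδ1 : δ ≤ 1 / 2) :
    ∫⁻ y, min 1 (ENNReal.ofReal (Bc * δ) / edist x y) ∂μ ≤
      ENNReal.ofReal ((C₀ * (2 * Bc) + C₀ + Bc) * ((⌈Real.logb 2 (1 / δ)⌉₊ : ℝ) + 1) * δ ^ s) := by
  set J : ℕ := ⌈Real.logb 2 (1 / δ)⌉₊ with hJ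
  have hδ1' : δ ≤ 1 := by linarith
  have h2J : 1 / δ ≤ (2 : ℝ) ^ J := by
    have h1 : Real.logb 2 (1 / δ) ≤ (J : ℝ) := Nat.le_ceil _
    have h2 : (1 : ℝ) / δ = (2 : ℝ) ^ Real.logb 2 (1 / δ) :=
      (Real.rpow_logb (by norm_num) (by norm_num) (by positivity)).symm
    calc (1 : ℝ) / δ = (2 : ℝ) ^ Real.logb 2 (1 / δ) := h2
      _ ≤ (2 : ℝ) ^ (J : ℝ) := Real.rpow_le_rpow_of_exponent_le one_le_two h1
      _ = (2 : ℝ) ^ J := Real.rpow_natCast 2 J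
  have hδs : δ ≤ δ ^ s := by
    have := Real.rpow_le_rpow_of_exponent_ge hδ0 hδ1' hs1
    rwa [Real.rpow_one] at this
  set F : α → ℝ≥0∞ := fun y =>
    ((Metric.ball x δ).indicator (fun _ => 1) y
      + ∑ j ∈ Finset.range J, (Metric.ball x (2 ^ (j + 1) * δ)).indicator
          (fun _ => ENNReal.ofReal (Bc / 2 ^ j)) y)
      + ENNReal.ofReal (Bc * δ) with hF
  have hpoint : ∀ y, min 1 (ENNReal.ofReal (Bc * δ) / edist x y) ≤ F y := by
    intro y
    set d := dist x y with hd
    have hdnn : 0 ≤ d := dist_nonneg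
    have hedist : edist x y = ENNReal.ofReal d := edist_dist x y
    rcases lt_or_ge d δ with hc | hc
    · have hmem : y ∈ Metric.ball x δ := by
        rw [Metric.mem_ball, dist_comm]; exact hc
      calc min 1 (ENNReal.ofReal (Bc * δ) / edist x y) ≤ 1 := min_le_left _ _
        _ = (Metric.ball x δ).indicator (fun _ => 1) y := by
            rw [Set.indicator_of_mem hmem]
        _ ≤ F y := by
            rw [hF]
            exact le_add_right (le_add_right (le_refl _))
    · have hdpos : 0 < d := lt_of_lt_of_le hδ0 hc
      have hψ : min 1 (ENNReal.ofReal (Bc * δ) / edist x y) ≤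
          ENNReal.ofReal (Bc * δ) / ENNReal.ofReal d := by
        rw [← hedist]; exact min_le_right _ _
      rcases lt_or_ge d ((2 : ℝ) ^ J * δ) with hcase | hcase
      · set j1 : ℕ := ⌊Real.logb 2 (d / δ)⌋₊ with hj1
        have hdδ1 : 1 ≤ d / δ := (one_le_div hδ0).mpr hc
        have hlognn : 0 ≤ Real.logb 2 (d / δ) := Real.logb_nonneg (by norm_num) hdδ1
        have hlow : (2 : ℝ) ^ j1 ≤ d / δ := by
          have h1 : (j1 : ℝ) ≤ Real.logb 2 (d / δ) := Nat.floor_le hlognn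
          calc (2 : ℝ) ^ j1 = (2 : ℝ) ^ (j1 : ℝ) := (Real.rpow_natCast 2 j1).symm
            _ ≤ (2 : ℝ) ^ Real.logb 2 (d / δ) :=
                Real.rpow_le_rpow_of_exponent_le one_le_two h1
            _ = d / δ := Real.rpow_logb (by norm_num) (by norm_num) (by positivity)
        have hhigh : d / δ < (2 : ℝ) ^ (j1 + 1) := by
          have h1 : Real.logb 2 (d / δ) < (j1 : ℝ) + 1 := Nat.lt_floor_add_one _
          calc d / δ = (2 : ℝ) ^ Real.logb 2 (d / δ) :=
              (Real.rpow_logb (by norm_num) (by norm_num) (by positivity)).symm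
            _ < (2 : ℝ) ^ ((j1 : ℝ) + 1) :=
                Real.rpow_lt_rpow_of_exponent_lt (by norm_num) h1
            _ = (2 : ℝ) ^ (j1 + 1) := by
                rw [← Real.rpow_natCast 2 (j1 + 1)]; push_cast; ring_nf
        have hj1J : j1 < J := by
          by_contra hcon
          push_neg at hcon
          have : (2 : ℝ) ^ J ≤ (2 : ℝ) ^ j1 := pow_le_pow_right₀ one_le_two hcon
          have hlt : d / δ < (2 : ℝ) ^ J := (div_lt_iff₀ hδ0).mpr hcase
          linarith
        have hmem : y ∈ Metric.ball x (2 ^ (j1 + 1) * δ) := by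
          rw [Metric.mem_ball, dist_comm]
          calc d < (2 : ℝ) ^ (j1 + 1) * δ := by
                rw [div_lt_iff₀ hδ0] at hhigh; linarith
            _ = _ := rfl
        have hstep : ENNReal.ofReal (Bc * δ) / ENNReal.ofReal d ≤
            ENNReal.ofReal (Bc / 2 ^ j1) := by
          have h2 : ENNReal.ofReal (Bc * δ) / ENNReal.ofReal d ≤
              ENNReal.ofReal (Bc * δ) / ENNReal.ofReal ((2 : ℝ) ^ j1 * δ) := by
            apply ENNReal.div_le_div_left
            apply ENNReal.ofReal_le_ofReal
            rw [le_div_iff₀ hδ0] at hlow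
            linarith
          have h3 : ENNReal.ofReal (Bc * δ) / ENNReal.ofReal ((2 : ℝ) ^ j1 * δ) =
              ENNReal.ofReal (Bc * δ / ((2 : ℝ) ^ j1 * δ)) := by
            rw [ENNReal.ofReal_div_of_pos (by positivity)]
          have h4 : Bc * δ / ((2 : ℝ) ^ j1 * δ) = Bc / 2 ^ j1 := by
            field_simp
          rw [h3, h4] at h2
          exact h2
        calc min 1 (ENNReal.ofReal (Bc * δ) / edist x y)
            ≤ ENNReal.ofReal (Bc / 2 ^ j1) := le_trans hψ hstep
          _ = (Metric.ball x (2 ^ (j1 + 1) * δ)).indicator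
              (fun _ => ENNReal.ofReal (Bc / 2 ^ j1)) y := by
              rw [Set.indicator_of_mem hmem]
          _ ≤ ∑ j ∈ Finset.range J, (Metric.ball x (2 ^ (j + 1) * δ)).indicator
              (fun _ => ENNReal.ofReal (Bc / 2 ^ j)) y := by
              exact Finset.single_le_sum (f := fun j =>
                (Metric.ball x (2 ^ (j + 1) * δ)).indicator
                  (fun _ => ENNReal.ofReal (Bc / 2 ^ j)) y)
                (fun j _ => zero_le) (Finset.mem_range.mpr hj1J)
          _ ≤ F y := by
              rw [hF]
              exact le_add_right (le_add_left (le_refl _))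
      · have hstep : ENNReal.ofReal (Bc * δ) / ENNReal.ofReal d ≤
            ENNReal.ofReal (Bc * δ) := by
          have h2 : ENNReal.ofReal (Bc * δ) / ENNReal.ofReal d ≤
              ENNReal.ofReal (Bc * δ) / ENNReal.ofReal ((2 : ℝ) ^ J * δ) := by
            apply ENNReal.div_le_div_left
            exact ENNReal.ofReal_le_ofReal hcase
          have h3 : ENNReal.ofReal (Bc * δ) / ENNReal.ofReal ((2 : ℝ) ^ J * δ) =
              ENNReal.ofReal (Bc * δ / ((2 : ℝ) ^ J * δ)) := by
            rw [ENNReal.ofReal_div_of_pos (by positivity)]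
          have h4 : Bc * δ / ((2 : ℝ) ^ J * δ) = Bc / 2 ^ J := by field_simp
          have h5 : Bc / 2 ^ J ≤ Bc * δ := by
            have h6 : (1 : ℝ) / δ ≤ 2 ^ J := h2J
            rw [div_le_iff₀ (by positivity : (0:ℝ) < (2:ℝ) ^ J)]
            rw [div_le_iff₀ hδ0] at h6
            nlinarith
          calc ENNReal.ofReal (Bc * δ) / ENNReal.ofReal d ≤
              ENNReal.ofReal (Bc * δ / ((2 : ℝ) ^ J * δ)) := by rw [← h3]; exact h2
            _ ≤ ENNReal.ofReal (Bc * δ) := by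
                rw [h4]; exact ENNReal.ofReal_le_ofReal h5
        calc min 1 (ENNReal.ofReal (Bc * δ) / edist x y)
            ≤ ENNReal.ofReal (Bc * δ) := le_trans hψ hstep
          _ ≤ F y := by rw [hF]; exact le_add_left (le_refl _)
  refine le_trans (lintegral_mono hpoint) ?_
  have hint : ∫⁻ y, F y ∂μ =
      (μ (Metric.ball x δ)
        + ∑ j ∈ Finset.range J, ENNReal.ofReal (Bc / 2 ^ j) * μ (Metric.ball x (2 ^ (j + 1) * δ)))
        + ENNReal.ofReal (Bc * δ) := by
    rw [hF]
    rw [lintegral_add_right _ measurable_const]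
    rw [lintegral_add_left ((measurable_const.indicator Metric.isOpen_ball.measurableSet))]
    congr 2
    · rw [lintegral_indicator_const Metric.isOpen_ball.measurableSet, one_mul]
    · rw [lintegral_finset_sum]
      · apply Finset.sum_congr rfl
        intro j _
        rw [lintegral_indicator_const Metric.isOpen_ball.measurableSet]
      · intro j _
        exact measurable_const.indicator Metric.isOpen_ball.measurableSet
    · rw [lintegral_const, measure_univ, mul_one]
  rw [hint]
  have hball1 : μ (Metric.ball x δ) ≤ ENNReal.ofReal (C₀ * δ ^ s) := hfrost x δ hδ0
  have hterm : ∀ j, ENNReal.ofReal (Bc / 2 ^ j) * μ (Metric.ball x (2 ^ (j + 1) * δ)) ≤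
      ENNReal.ofReal (2 * Bc * C₀ * δ ^ s) := by
    intro j
    have hrpos : (0 : ℝ) < 2 ^ (j + 1) * δ := by positivity
    calc ENNReal.ofReal (Bc / 2 ^ j) * μ (Metric.ball x (2 ^ (j + 1) * δ))
        ≤ ENNReal.ofReal (Bc / 2 ^ j) * ENNReal.ofReal (C₀ * (2 ^ (j + 1) * δ) ^ s) :=
          mul_le_mul_right (hfrost x _ hrpos) _
      _ = ENNReal.ofReal (Bc / 2 ^ j * (C₀ * (2 ^ (j + 1) * δ) ^ s)) := by
          rw [← ENNReal.ofReal_mul (by positivity)]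
      _ ≤ ENNReal.ofReal (2 * Bc * C₀ * δ ^ s) := by
          apply ENNReal.ofReal_le_ofReal
          have hsplit : ((2 : ℝ) ^ (j + 1) * δ) ^ s = ((2 : ℝ) ^ (j + 1)) ^ s * δ ^ s :=
            Real.mul_rpow (by positivity) hδ0.le
          have hpow : ((2 : ℝ) ^ (j + 1)) ^ s ≤ (2 : ℝ) ^ (j + 1) := by
            rw [← Real.rpow_natCast 2 (j + 1), ← Real.rpow_mul (by norm_num)]
            apply Real.rpow_le_rpow_of_exponent_le one_le_two
            have : (0 : ℝ) ≤ ((j + 1 : ℕ) : ℝ) := Nat.cast_nonneg _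
            nlinarith
          rw [hsplit]
          have hds : 0 ≤ δ ^ s := Real.rpow_nonneg hδ0.le s
          have h2p : ((2:ℝ) ^ (j+1)) = 2 * 2 ^ j := by ring
          have hb2 : (0:ℝ) < 2 ^ j := by positivity
          have hkey : Bc / 2 ^ j * (C₀ * ((2:ℝ) ^ (j+1)) ^ s) ≤ 2 * Bc * C₀ := by
            calc Bc / 2 ^ j * (C₀ * ((2:ℝ) ^ (j+1)) ^ s)
                ≤ Bc / 2 ^ j * (C₀ * (2:ℝ) ^ (j+1)) := by
                  apply mul_le_mul_of_nonneg_left _ (by positivity)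
                  exact mul_le_mul_of_nonneg_left hpow hC₀.le
              _ = 2 * Bc * C₀ := by rw [h2p]; field_simp
          calc Bc / 2 ^ j * (C₀ * (((2:ℝ) ^ (j+1)) ^ s * δ ^ s))
              = (Bc / 2 ^ j * (C₀ * ((2:ℝ) ^ (j+1)) ^ s)) * δ ^ s := by ring
            _ ≤ 2 * Bc * C₀ * δ ^ s := mul_le_mul_of_nonneg_right hkey hds
  have hsum : ∑ j ∈ Finset.range J, ENNReal.ofReal (Bc / 2 ^ j) *
      μ (Metric.ball x (2 ^ (j + 1) * δ)) ≤ ENNReal.ofReal ((J : ℝ) * (2 * Bc * C₀ * δ ^ s)) := by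
    calc ∑ j ∈ Finset.range J, ENNReal.ofReal (Bc / 2 ^ j) * μ (Metric.ball x (2 ^ (j + 1) * δ))
        ≤ ∑ _j ∈ Finset.range J, ENNReal.ofReal (2 * Bc * C₀ * δ ^ s) :=
          Finset.sum_le_sum (fun j _ => hterm j)
      _ = J • ENNReal.ofReal (2 * Bc * C₀ * δ ^ s) := by
          rw [Finset.sum_const, Finset.card_range]
      _ = ENNReal.ofReal ((J : ℝ) * (2 * Bc * C₀ * δ ^ s)) := by
          rw [nsmul_eq_mul, ← ENNReal.ofReal_natCast J, ← ENNReal.ofReal_mul (Nat.cast_nonneg _)]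
  have ht3 : ENNReal.ofReal (Bc * δ) ≤ ENNReal.ofReal (Bc * δ ^ s) := by
    apply ENNReal.ofReal_le_ofReal
    nlinarith
  calc (μ (Metric.ball x δ)
        + ∑ j ∈ Finset.range J, ENNReal.ofReal (Bc / 2 ^ j) * μ (Metric.ball x (2 ^ (j + 1) * δ)))
        + ENNReal.ofReal (Bc * δ)
      ≤ (ENNReal.ofReal (C₀ * δ ^ s) + ENNReal.ofReal ((J : ℝ) * (2 * Bc * C₀ * δ ^ s)))
        + ENNReal.ofReal (Bc * δ ^ s) := by
        exact add_le_add (add_le_add hball1 hsum) ht3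
    _ = ENNReal.ofReal (C₀ * δ ^ s + (J : ℝ) * (2 * Bc * C₀ * δ ^ s) + Bc * δ ^ s) := by
        rw [← ENNReal.ofReal_add (by positivity) (by positivity),
          ← ENNReal.ofReal_add (by positivity) (by positivity)]
    _ ≤ ENNReal.ofReal ((C₀ * (2 * Bc) + C₀ + Bc) * ((J : ℝ) + 1) * δ ^ s) := by
        apply ENNReal.ofReal_le_ofReal
        have hds : 0 ≤ δ ^ s := Real.rpow_nonneg hδ0.le s
        have hJnn : (0 : ℝ) ≤ (J : ℝ) := Nat.cast_nonneg _
        nlinarith [mul_nonneg (mul_nonneg hC₀.le hJnn) hds,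
          mul_nonneg (mul_nonneg (by linarith : (0:ℝ) ≤ Bc) hJnn) hds,
          mul_nonneg (mul_nonneg (by linarith : (0:ℝ) ≤ Bc) hC₀.le) hds]

lemma ceil_logb_bound {δ : ℝ} (hδ0 : 0 < δ) (hδ1 : δ ≤ 1 / 2) :
    ((⌈Real.logb 2 (1 / δ)⌉₊ : ℝ) + 1) ≤ 5 * Real.log (1 / δ) := by
  have h2δ : (2 : ℝ) ≤ 1 / δ := by rw [le_div_iff₀ hδ0]; linarith
  have hL : Real.log 2 ≤ Real.log (1 / δ) := Real.log_le_log (by norm_num) h2δ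
  have hlog2 : (0.6931471803 : ℝ) < Real.log 2 := Real.log_two_gt_d9
  have hLpos : 0 < Real.log (1 / δ) := by linarith
  have hlbnn : 0 ≤ Real.logb 2 (1 / δ) :=
    Real.logb_nonneg (by norm_num) (by linarith)
  have hceil : (⌈Real.logb 2 (1 / δ)⌉₊ : ℝ) < Real.logb 2 (1 / δ) + 1 :=
    Nat.ceil_lt_add_one hlbnn
  have h1 : Real.logb 2 (1 / δ) ≤ 1.5 * Real.log (1 / δ) := by
    rw [Real.logb, div_le_iff₀ (by linarith : (0 : ℝ) < Real.log 2)]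
    nlinarith [hLpos.le]
  have h2 : (2 : ℝ) ≤ 3.5 * Real.log (1 / δ) := by nlinarith
  linarith

theorem double_integral_volume_inter_thickenings_le
    (n k : ℕ) (hk : 1 ≤ k) (hkn : k < n) (s : ℝ) (hs0 : 0 < s) (hs1 : s ≤ 1)
    (C₀ : ℝ) (hC₀ : 0 < C₀)
    (μ : Measure ((Fin (n - k) → ℝ) × (Fin k → Fin (n - k) → ℝ)))
    [IsProbabilityMeasure μ]
    (hsupp : μ {x | ¬ admissibleCode n k x} = 0)
    (hfrostman : ∀ (x : (Fin (n - k) → ℝ) × (Fin k → Fin (n - k) → ℝ)) (r : ℝ),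
      0 < r → μ (Metric.ball x r) ≤ ENNReal.ofReal (C₀ * r ^ s)) :
    ∃ C : ℝ, 0 < C ∧
      ∀ δ : ℝ, 0 < δ → δ ≤ 1 / 2 →
        ∫⁻ x, ∫⁻ y,
            volume (Metric.thickening δ (affGraph n k x) ∩
              Metric.thickening δ (affGraph n k y) ∩ simplexCube n k) ∂μ ∂μ ≤
          ENNReal.ofReal (C * δ ^ ((n : ℝ) - k + s) * Real.log (1 / δ)) := by
  have hBpos : (0 : ℝ) < 16 * ((k : ℝ) + 1) ^ 2 := by positivity
  have hBc1 : (1 : ℝ) ≤ 16 * ((k : ℝ) + 1) ^ 2 := by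
    nlinarith [Nat.cast_nonneg (α := ℝ) k]
  have hKpos : (0 : ℝ) <
      C₀ * (2 * (16 * ((k : ℝ) + 1) ^ 2)) + C₀ + 16 * ((k : ℝ) + 1) ^ 2 := by
    nlinarith [hC₀]
  refine ⟨(2 * ((k : ℝ) + 1)) ^ (n - k) *
      ((C₀ * (2 * (16 * ((k : ℝ) + 1) ^ 2)) + C₀ + 16 * ((k : ℝ) + 1) ^ 2) * 5),
    mul_pos (pow_pos (by positivity) _) (by nlinarith), ?_⟩
  intro δ hδ0 hδ1
  have hadm : ∀ᵐ z ∂μ, admissibleCode n k z := ae_iff.mpr hsupp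
  have hcPne : (ENNReal.ofReal (2 * (((k : ℝ) + 1) * δ)) ^ (n - k)) ≠ ⊤ :=
    ENNReal.pow_ne_top ENNReal.ofReal_ne_top
  have hinner : ∀ x, admissibleCode n k x →
      ∫⁻ y, volume (Metric.thickening δ (affGraph n k x) ∩
          Metric.thickening δ (affGraph n k y) ∩ simplexCube n k) ∂μ ≤
      ENNReal.ofReal (2 * (((k : ℝ) + 1) * δ)) ^ (n - k) *
        ENNReal.ofReal ((C₀ * (2 * (16 * ((k : ℝ) + 1) ^ 2)) + C₀ + 16 * ((k : ℝ) + 1) ^ 2) *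
          ((⌈Real.logb 2 (1 / δ)⌉₊ : ℝ) + 1) * δ ^ s) := by
    intro x hxadm
    calc ∫⁻ y, volume (Metric.thickening δ (affGraph n k x) ∩
            Metric.thickening δ (affGraph n k y) ∩ simplexCube n k) ∂μ
        ≤ ∫⁻ y, ENNReal.ofReal (2 * (((k : ℝ) + 1) * δ)) ^ (n - k) *
            min 1 (ENNReal.ofReal (16 * ((k : ℝ) + 1) ^ 2 * δ) / edist x y) ∂μ := by
          apply lintegral_mono_ae
          filter_upwards [hadm] with y hy
          exact volB hk x y hxadm hy hδ0
      _ = ENNReal.ofReal (2 * (((k : ℝ) + 1) * δ)) ^ (n - k) *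
          ∫⁻ y, min 1 (ENNReal.ofReal (16 * ((k : ℝ) + 1) ^ 2 * δ) / edist x y) ∂μ :=
          lintegral_const_mul' _ _ hcPne
      _ ≤ _ := mul_le_mul_right
          (lintegral_min_bound μ C₀ s hC₀ hs0 hs1 hfrostman x
            (16 * ((k : ℝ) + 1) ^ 2) δ hBc1 hδ0 hδ1) _
  calc ∫⁻ x, ∫⁻ y, volume (Metric.thickening δ (affGraph n k x) ∩
          Metric.thickening δ (affGraph n k y) ∩ simplexCube n k) ∂μ ∂μ
      ≤ ∫⁻ _x, (ENNReal.ofReal (2 * (((k : ℝ) + 1) * δ)) ^ (n - k) *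
          ENNReal.ofReal ((C₀ * (2 * (16 * ((k : ℝ) + 1) ^ 2)) + C₀ + 16 * ((k : ℝ) + 1) ^ 2) *
            ((⌈Real.logb 2 (1 / δ)⌉₊ : ℝ) + 1) * δ ^ s)) ∂μ := by
        apply lintegral_mono_ae
        filter_upwards [hadm] with x hx
        exact hinner x hx
    _ = ENNReal.ofReal (2 * (((k : ℝ) + 1) * δ)) ^ (n - k) *
          ENNReal.ofReal ((C₀ * (2 * (16 * ((k : ℝ) + 1) ^ 2)) + C₀ + 16 * ((k : ℝ) + 1) ^ 2) *
            ((⌈Real.logb 2 (1 / δ)⌉₊ : ℝ) + 1) * δ ^ s) := by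
        rw [lintegral_const, measure_univ, mul_one]
    _ ≤ ENNReal.ofReal ((2 * ((k : ℝ) + 1)) ^ (n - k) *
          ((C₀ * (2 * (16 * ((k : ℝ) + 1) ^ 2)) + C₀ + 16 * ((k : ℝ) + 1) ^ 2) * 5) *
          δ ^ ((n : ℝ) - k + s) * Real.log (1 / δ)) := by
        rw [← ENNReal.ofReal_pow (by positivity : (0:ℝ) ≤ 2 * (((k : ℝ) + 1) * δ))]
        rw [← ENNReal.ofReal_mul (by positivity)]
        apply ENNReal.ofReal_le_ofReal
        have hlog := ceil_logb_bound hδ0 hδ1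
        have hsplit : (2 * (((k : ℝ) + 1) * δ)) ^ (n - k) =
            (2 * ((k : ℝ) + 1)) ^ (n - k) * δ ^ (n - k) := by
          rw [show 2 * (((k : ℝ) + 1) * δ) = (2 * ((k : ℝ) + 1)) * δ by ring, mul_pow]
        have hrpow : δ ^ ((n : ℝ) - k + s) = δ ^ (n - k : ℕ) * δ ^ s := by
          rw [show (n : ℝ) - k = ((n - k : ℕ) : ℝ) by
            rw [Nat.cast_sub hkn.le]]
          rw [Real.rpow_add hδ0, Real.rpow_natCast]
        rw [hsplit, hrpow]
        have hnn : (0 : ℝ) ≤ (2 * ((k : ℝ) + 1)) ^ (n - k) *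
            (C₀ * (2 * (16 * ((k : ℝ) + 1) ^ 2)) + C₀ + 16 * ((k : ℝ) + 1) ^ 2) *
            δ ^ (n - k) * δ ^ s := by
          apply mul_nonneg
          apply mul_nonneg
          apply mul_nonneg (by positivity) hKpos.le
          · positivity
          · exact Real.rpow_nonneg hδ0.le s
        calc (2 * ((k : ℝ) + 1)) ^ (n - k) * δ ^ (n - k) *
              ((C₀ * (2 * (16 * ((k : ℝ) + 1) ^ 2)) + C₀ + 16 * ((k : ℝ) + 1) ^ 2) *
                ((⌈Real.logb 2 (1 / δ)⌉₊ : ℝ) + 1) * δ ^ s)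
            = ((2 * ((k : ℝ) + 1)) ^ (n - k) *
                (C₀ * (2 * (16 * ((k : ℝ) + 1) ^ 2)) + C₀ + 16 * ((k : ℝ) + 1) ^ 2) *
                δ ^ (n - k) * δ ^ s) * ((⌈Real.logb 2 (1 / δ)⌉₊ : ℝ) + 1) := by ring
          _ ≤ ((2 * ((k : ℝ) + 1)) ^ (n - k) *
                (C₀ * (2 * (16 * ((k : ℝ) + 1) ^ 2)) + C₀ + 16 * ((k : ℝ) + 1) ^ 2) *
                δ ^ (n - k) * δ ^ s) * (5 * Real.log (1 / δ)) :=
              mul_le_mul_of_nonneg_left hlog hnn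
          _ = _ := by ring
end

section
/- Let n ≥ 1 be an integer and 0 ≤ α ≤ n a real number. There is a constant c = c(n,α) > 0 such that for every set A ⊆ ℝ^n and every δ > 0, the Lebesgue measure of the open δ-neighborhood of A satisfies L^n(A_δ) ≥ c · H^α_∞(A) · δ^{n−α}. -/
open scoped ENNReal
open MeasureTheory

/-- The `α`-dimensional Hausdorff content `H^α_∞`: the infimum, over all countable covers
`A ⊆ ⋃ i, U i`, of `∑ i (diam U i) ^ α` (empty sets of the cover contribute `0`). -/
noncomputable def hContent {X : Type*} [EMetricSpace X] (α : ℝ) (A : Set X) : ℝ≥0∞ :=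
  ⨅ (U : ℕ → Set X) (_ : A ⊆ ⋃ i, U i),
    ∑' i, ⨆ (_ : (U i).Nonempty), EMetric.diam (U i) ^ α

lemma hContent_le_of_cover {X : Type*} [MetricSpace X] (α : ℝ) (hα : 0 ≤ α)
    (A : Set X) (s : Finset X) (r : ℝ)
    (hcov : A ⊆ ⋃ x ∈ s, Metric.ball x r) :
    hContent α A ≤ s.card * (ENNReal.ofReal (2 * r)) ^ α := by
  classical
  set L := s.toList with hL
  set D : ℝ≥0∞ := (ENNReal.ofReal (2 * r)) ^ α with hD
  set U : ℕ → Set X := fun i =>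
    if h : i < L.length then Metric.ball (L.get ⟨i, h⟩) r else ∅ with hU
  have hcover : A ⊆ ⋃ i, U i := by
    intro a ha
    obtain ⟨x, hxs, hax⟩ := Set.mem_iUnion₂.mp (hcov ha)
    have hxL : x ∈ L := by simpa [hL] using Finset.mem_toList.mpr hxs
    obtain ⟨⟨i, hi⟩, hget⟩ := List.mem_iff_get.mp hxL
    refine Set.mem_iUnion.mpr ⟨i, ?_⟩
    simp only [hU, dif_pos hi, hget]
    exact hax
  have hdiam : ∀ x : X, EMetric.diam (Metric.ball x r) ≤ ENNReal.ofReal (2 * r) := by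
    intro x
    rw [← Metric.emetric_ball]
    refine le_trans EMetric.diam_ball ?_
    rw [ENNReal.ofReal_mul (by norm_num : (0:ℝ) ≤ 2)]
    simp
  have hterm : ∀ i, (⨆ _ : (U i).Nonempty, EMetric.diam (U i) ^ α)
      ≤ if i < L.length then D else 0 := by
    intro i
    by_cases hi : i < L.length
    · simp only [hi, if_true]
      refine iSup_le fun _ => ?_
      simp only [hU, dif_pos hi, hD]
      exact ENNReal.rpow_le_rpow (hdiam _) hα
    · simp only [hi, if_false]
      refine iSup_le fun hne => ?_
      exfalso
      simp [hU, dif_neg hi] at hne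
  calc hContent α A ≤ ∑' i, ⨆ _ : (U i).Nonempty, EMetric.diam (U i) ^ α :=
        iInf_le_of_le U (iInf_le _ hcover)
    _ ≤ ∑' i, if i < L.length then D else 0 := ENNReal.tsum_le_tsum hterm
    _ = ∑ i ∈ Finset.range L.length, (if i < L.length then D else 0) := by
        refine tsum_eq_sum ?_
        intro i hi
        simp only [Finset.mem_range] at hi
        simp [hi]
    _ = ∑ i ∈ Finset.range L.length, D := by
        refine Finset.sum_congr rfl fun i hi => ?_
        simp [Finset.mem_range.mp hi]
    _ = L.length * D := by simp [Finset.sum_const, mul_comm]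
    _ = s.card * D := by rw [hL, Finset.length_toList]

theorem volume_thickening_ge_content
    (n : ℕ) (hn : 1 ≤ n) (α : ℝ) (hα0 : 0 ≤ α) (hαn : α ≤ n) :
    ∃ c : ℝ, 0 < c ∧
      ∀ (A : Set (EuclideanSpace ℝ (Fin n))) (δ : ℝ), 0 < δ →
        ENNReal.ofReal c * hContent α A * ENNReal.ofReal (δ ^ ((n : ℝ) - α)) ≤
          volume (Metric.thickening δ A) := by
  classical
  set X := EuclideanSpace ℝ (Fin n)
  have hfr : Module.finrank ℝ X = n := finrank_euclideanSpace_fin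
  haveI : Nontrivial X := Module.nontrivial_of_finrank_pos (R := ℝ) (by omega : 0 < Module.finrank ℝ X)
  set vB : ℝ≥0∞ := volume (Metric.ball (0 : X) 1) with hvB
  have hvB_pos : 0 < vB := Metric.measure_ball_pos _ _ one_pos
  have hvB_lt_top : vB < ⊤ := measure_ball_lt_top
  set c : ℝ := vB.toReal / 4 ^ n with hc
  have hc_pos : 0 < c := by
    apply div_pos
    · exact ENNReal.toReal_pos hvB_pos.ne' hvB_lt_top.ne
    · positivity
  refine ⟨c, hc_pos, fun A δ hδ => ?_⟩
  -- maximal (δ/2)-separated subset of A, by Zorn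
  have hzorn : ∀ C ⊆ {S : Set X | S ⊆ A ∧ S.Pairwise fun x y => δ / 2 ≤ dist x y},
      IsChain (· ⊆ ·) C → ∃ ub ∈ {S : Set X | S ⊆ A ∧ S.Pairwise fun x y => δ / 2 ≤ dist x y},
        ∀ s ∈ C, s ⊆ ub := by
    intro C hC hchain
    refine ⟨⋃₀ C, ⟨?_, ?_⟩, fun t ht => Set.subset_sUnion_of_mem ht⟩
    · exact Set.sUnion_subset fun t ht => (hC ht).1
    · intro x hx y hy hxy
      obtain ⟨t, htC, hxt⟩ := hx
      obtain ⟨u, huC, hyu⟩ := hy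
      rcases hchain.total htC huC with h | h
      · exact (hC huC).2 (h hxt) hyu hxy
      · exact (hC htC).2 hxt (h hyu) hxy
  obtain ⟨S, hS⟩ := zorn_subset
      {S : Set X | S ⊆ A ∧ S.Pairwise fun x y => δ / 2 ≤ dist x y} hzorn
  obtain ⟨hSA, hSsep⟩ := hS.prop
  -- maximality: every point of A is within δ/2 of S
  have hcov : A ⊆ ⋃ x ∈ S, Metric.ball x (δ / 2) := by
    intro a ha
    by_contra hnot
    have hfar : ∀ x ∈ S, δ / 2 ≤ dist a x := by
      intro x hx
      by_contra hlt
      push_neg at hlt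
      exact hnot (Set.mem_iUnion₂.mpr ⟨x, hx, by simpa [Metric.mem_ball] using hlt⟩)
    have hins : insert a S ∈ {S : Set X | S ⊆ A ∧ S.Pairwise fun x y => δ / 2 ≤ dist x y} := by
      constructor
      · exact Set.insert_subset ha hSA
      · intro x hx y hy hxy
        rcases hx with rfl | hx
        · rcases hy with rfl | hy
          · exact absurd rfl hxy
          · exact hfar y hy
        · rcases hy with rfl | hy
          · rw [dist_comm]; exact hfar x hx
          · exact hSsep hx hy hxy
    have haS : a ∈ S := hS.mem_of_prop_insert hins
    have := hfar a haS
    simp at this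
    linarith
  -- small balls around points of S are disjoint and inside the thickening
  have hdisj : ∀ x ∈ S, ∀ y ∈ S, x ≠ y →
      Disjoint (Metric.ball x (δ / 4)) (Metric.ball y (δ / 4)) := by
    intro x hx y hy hxy
    refine Metric.ball_disjoint_ball ?_
    have := hSsep hx hy hxy
    linarith
  have hsub : ∀ x ∈ S, Metric.ball x (δ / 4) ⊆ Metric.thickening δ A := by
    intro x hx y hy
    rw [Metric.mem_ball] at hy
    exact Metric.mem_thickening_iff.mpr ⟨x, hSA hx, by linarith⟩
  have hvball : ∀ x : X, volume (Metric.ball x (δ / 4)) =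
      ENNReal.ofReal ((δ / 4) ^ n) * vB := by
    intro x
    rw [Measure.addHaar_ball volume x (by linarith : (0:ℝ) ≤ δ / 4), hfr]
  have hvball_pos : (0 : ℝ≥0∞) < ENNReal.ofReal ((δ / 4) ^ n) * vB := by
    rw [← hvball 0]
    exact Metric.measure_ball_pos _ _ (by linarith)
  rcases Set.finite_or_infinite S with hfin | hinf
  · -- finite case
    set s := hfin.toFinset with hs
    have hcov' : A ⊆ ⋃ x ∈ s, Metric.ball x (δ / 2) := by
      intro a ha
      obtain ⟨x, hx, hax⟩ := Set.mem_iUnion₂.mp (hcov ha)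
      exact Set.mem_iUnion₂.mpr ⟨x, hfin.mem_toFinset.mpr hx, hax⟩
    have hcontent : hContent α A ≤ s.card * (ENNReal.ofReal δ) ^ α := by
      have := hContent_le_of_cover α hα0 A s (δ / 2) hcov'
      rwa [show 2 * (δ / 2) = δ by ring] at this
    have hvol : (s.card : ℝ≥0∞) * (ENNReal.ofReal ((δ / 4) ^ n) * vB)
        ≤ volume (Metric.thickening δ A) := by
      have hmeas : volume (⋃ x ∈ s, Metric.ball x (δ / 4))
          = ∑ x ∈ s, volume (Metric.ball x (δ / 4)) := by
        refine measure_biUnion_finset ?_ fun x _ => measurableSet_ball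
        intro x hx y hy hxy
        exact hdisj x (by simpa [hs, hfin.mem_toFinset] using hx)
          y (by simpa [hs, hfin.mem_toFinset] using hy) hxy
      have hsum : ∑ x ∈ s, volume (Metric.ball x (δ / 4))
          = s.card * (ENNReal.ofReal ((δ / 4) ^ n) * vB) := by
        rw [Finset.sum_congr rfl fun x _ => hvball x, Finset.sum_const, nsmul_eq_mul]
      rw [← hsum, ← hmeas]
      refine measure_mono ?_
      refine Set.iUnion₂_subset fun x hx => hsub x ?_
      simpa [hs, hfin.mem_toFinset] using hx
    -- arithmetic
    calc ENNReal.ofReal c * hContent α A * ENNReal.ofReal (δ ^ ((n : ℝ) - α))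
        ≤ ENNReal.ofReal c * (s.card * (ENNReal.ofReal δ) ^ α)
            * ENNReal.ofReal (δ ^ ((n : ℝ) - α)) := by
          gcongr
      _ = s.card * (ENNReal.ofReal c *
            ((ENNReal.ofReal δ) ^ α * (ENNReal.ofReal δ) ^ ((n : ℝ) - α))) := by
          rw [← ENNReal.ofReal_rpow_of_pos hδ]
          ring
      _ = s.card * (ENNReal.ofReal ((δ / 4) ^ n) * vB) := by
          congr 1
          rw [← ENNReal.rpow_add _ _ (by simp [hδ]) ENNReal.ofReal_ne_top]
          rw [show α + ((n : ℝ) - α) = (n : ℝ) by ring]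
          rw [ENNReal.ofReal_rpow_of_pos hδ, Real.rpow_natCast,
            ← ENNReal.ofReal_mul hc_pos.le]
          rw [show c * δ ^ n = (δ / 4) ^ n * vB.toReal by
            rw [hc]; field_simp; rw [mul_assoc, ← mul_pow]; norm_num; left; ring]
          rw [ENNReal.ofReal_mul (by positivity), ENNReal.ofReal_toReal hvB_lt_top.ne]
      _ ≤ volume (Metric.thickening δ A) := hvol
  · -- infinite case: the thickening has infinite volume
    have htop : volume (Metric.thickening δ A) = ⊤ := by
      set f := hinf.natEmbedding with hf
      have hdisj' : Pairwise (Function.onFun Disjoint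
          fun k : ℕ => Metric.ball (f k : X) (δ / 4)) := by
        intro i j hij
        exact hdisj (f i) (f i).2 (f j) (f j).2
          (fun h => hij (f.injective (Subtype.ext h)))
      have hmeas : volume (⋃ k : ℕ, Metric.ball (f k : X) (δ / 4))
          = ∑' k : ℕ, volume (Metric.ball (f k : X) (δ / 4)) :=
        measure_iUnion hdisj' fun k => measurableSet_ball
      have hsum : ∑' k : ℕ, volume (Metric.ball (f k : X) (δ / 4)) = ⊤ := by
        have : ∀ k : ℕ, volume (Metric.ball (f k : X) (δ / 4))
            = ENNReal.ofReal ((δ / 4) ^ n) * vB := fun k => hvball _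
        rw [tsum_congr this]
        exact ENNReal.tsum_const_eq_top_of_ne_zero hvball_pos.ne'
      refine top_le_iff.mp ?_
      rw [← hsum, ← hmeas]
      refine measure_mono (Set.iUnion_subset fun k => hsub (f k) (f k).2)
    rw [htop]
    exact le_top
end
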